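/- arXiv:1302.1730 — 2 statements merged into one kernel-verified Lean document; each statement's English description precedes it below -/
import Mathlib

section
/- Let k be a field and B ⊆ A a subring pair of finite-dimensional k-algebras with 1_B = 1_A. If the enveloping algebra B^e = B ⊗_k B^op has finite representation type with n_{B^e} isomorphism classes of finitely generated indecomposable modules, then the minimum depth satisfies d(B,A) ≤ 1 + 2·n_{B^e}. -/
/-! # Depth of subring extensions (Kadison–Young)
For a unital subring `B ⊆ A`, `CC B n` realizes the `n`-fold relative tensor power
`C_n(A,B) = A ⊗_B ⋯ ⊗_B A` (with `C_0(A,B) = B`) as a quotient of the iterated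
tensor power over `ℤ` by the middle `B`-balancing relations, together with its
natural left/right `A`- and `B`-actions.  Bimodule maps, the divisibility relation
`M ∣ q ⬝ N`, H-equivalence, the depth conditions and the minimum depth `d(B,A) ∈ ℕ∞`
are then defined exactly as in the paper. -/

open TensorProduct

universe u

variable (A : Type u) [Ring A]

/-- `Tpow A n` is the `(n+1)`-fold tensor power `A ⊗ℤ ⋯ ⊗ℤ A`. -/
noncomputable def Tpow : ℕ → ModuleCat.{u} ℤ
  | 0 => ModuleCat.of ℤ A
  | n + 1 => ModuleCat.of ℤ (A ⊗[ℤ] (Tpow n : Type u))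

/-- Multiplication by `a : A` on the leftmost tensor factor. -/
noncomputable def lmulT (a : A) : ∀ n, (Tpow A n : Type u) →ₗ[ℤ] (Tpow A n : Type u)
  | 0 => (LinearMap.mulLeft ℤ a : A →ₗ[ℤ] A)
  | n + 1 => LinearMap.rTensor (Tpow A n : Type u) (LinearMap.mulLeft ℤ a)

/-- Multiplication by `a : A` on the rightmost tensor factor. -/
noncomputable def rmulT (a : A) : ∀ n, (Tpow A n : Type u) →ₗ[ℤ] (Tpow A n : Type u)
  | 0 => (LinearMap.mulRight ℤ a : A →ₗ[ℤ] A)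
  | n + 1 => LinearMap.lTensor A (rmulT a n)

private theorem lmulT_succ_apply (a : A) (n : ℕ) (x : A ⊗[ℤ] (Tpow A n : Type u)) :
    lmulT A a (n+1) x = LinearMap.rTensor (Tpow A n : Type u) (LinearMap.mulLeft ℤ a) x := rfl

private theorem rmulT_succ_apply (a : A) (n : ℕ) (x : A ⊗[ℤ] (Tpow A n : Type u)) :
    rmulT A a (n+1) x = LinearMap.lTensor A (rmulT A a n) x := rfl

private theorem auxcomm (M : Type u) [AddCommGroup M] [Module ℤ M] (a : A) (g : M →ₗ[ℤ] M)
    (x : A ⊗[ℤ] M) :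
    (LinearMap.rTensor M (LinearMap.mulLeft ℤ a)) ((LinearMap.lTensor A g) x) =
    (LinearMap.lTensor A g) ((LinearMap.rTensor M (LinearMap.mulLeft ℤ a)) x) := by
  induction x using TensorProduct.induction_on with
  | zero => simp
  | tmul c t => simp
  | add y z hy hz => simp only [map_add, hy, hz]

theorem lmulT_rmulT_comm (a b : A) : ∀ (n : ℕ) (x : (Tpow A n : Type u)),
    lmulT A a n (rmulT A b n x) = rmulT A b n (lmulT A a n x)
  | 0, x => (mul_assoc a x b).symm
  | n + 1, x => by
    show (lmulT A a (n+1)) ((rmulT A b (n+1)) x) = (rmulT A b (n+1)) ((lmulT A a (n+1)) x)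
    rw [lmulT, rmulT]
    exact auxcomm A (Tpow A n : Type u) a (rmulT A b n) x

private theorem aux1 (M : Type u) [AddCommGroup M] [Module ℤ M] (a c d : A) (t s : M) :
    LinearMap.rTensor M (LinearMap.mulLeft ℤ a) (c ⊗ₜ[ℤ] t - d ⊗ₜ[ℤ] s) =
      (a * c) ⊗ₜ[ℤ] t - (a * d) ⊗ₜ[ℤ] s := by simp

private theorem aux2 (M : Type u) [AddCommGroup M] [Module ℤ M] (g : M →ₗ[ℤ] M) (c d : A)
    (t s : M) :
    LinearMap.lTensor A g (c ⊗ₜ[ℤ] t - d ⊗ₜ[ℤ] s) = c ⊗ₜ[ℤ] (g t) - d ⊗ₜ[ℤ] (g s) := by simp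

private theorem aux3 (M : Type u) [AddCommGroup M] [Module ℤ M] (a c : A) (t : M) :
    LinearMap.rTensor M (LinearMap.mulLeft ℤ a) (c ⊗ₜ[ℤ] t) = (a * c) ⊗ₜ[ℤ] t := by simp

private theorem aux4 (M : Type u) [AddCommGroup M] [Module ℤ M] (g : M →ₗ[ℤ] M) (c : A) (t : M) :
    LinearMap.lTensor A g (c ⊗ₜ[ℤ] t) = c ⊗ₜ[ℤ] (g t) := by simp


variable {A}

/-- The `B`-balancing relations inside `Tpow A n`. -/
noncomputable def rel (B : Subring A) : ∀ n, Submodule ℤ (Tpow A n : Type u)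
  | 0 => ⊥
  | n + 1 =>
      Submodule.span ℤ
        {x : (Tpow A (n+1) : Type u) |
          (∃ (a : A) (b : B) (t : (Tpow A n : Type u)),
            x = ((a * (b : A)) ⊗ₜ[ℤ] t : A ⊗[ℤ] (Tpow A n : Type u)) -
                 a ⊗ₜ[ℤ] (lmulT A (b : A) n t)) ∨
          (∃ (a : A) (r : (Tpow A n : Type u)), r ∈ rel B n ∧
            x = (a ⊗ₜ[ℤ] r : A ⊗[ℤ] (Tpow A n : Type u)))}

theorem rel_succ (B : Subring A) (n : ℕ) :
    rel B (n+1) =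
      Submodule.span ℤ
        {x : (Tpow A (n+1) : Type u) |
          (∃ (a : A) (b : B) (t : (Tpow A n : Type u)),
            x = ((a * (b : A)) ⊗ₜ[ℤ] t : A ⊗[ℤ] (Tpow A n : Type u)) -
                 a ⊗ₜ[ℤ] (lmulT A (b : A) n t)) ∨
          (∃ (a : A) (r : (Tpow A n : Type u)), r ∈ rel B n ∧
            x = (a ⊗ₜ[ℤ] r : A ⊗[ℤ] (Tpow A n : Type u)))} := rfl

theorem rel_le_comap_lmulT (B : Subring A) (a : A) :
    ∀ n, rel B n ≤ (rel B n).comap (lmulT A a n)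
  | 0 => bot_le
  | n + 1 => by
    rw [rel_succ, Submodule.span_le]
    rintro x (⟨a', b, t, rfl⟩ | ⟨a', r, hr, rfl⟩) <;>
      apply Submodule.mem_comap.mpr <;> rw [lmulT_succ_apply]
    · rw [map_sub, LinearMap.rTensor_tmul, LinearMap.rTensor_tmul, LinearMap.mulLeft_apply,
        LinearMap.mulLeft_apply]
      refine Submodule.subset_span (Or.inl ⟨a * a', b, t, ?_⟩)
      rw [mul_assoc]
    · rw [LinearMap.rTensor_tmul, LinearMap.mulLeft_apply]
      exact Submodule.subset_span (Or.inr ⟨a * a', r, hr, rfl⟩)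

theorem rel_le_comap_rmulT (B : Subring A) (a : A) :
    ∀ n, rel B n ≤ (rel B n).comap (rmulT A a n)
  | 0 => bot_le
  | n + 1 => by
    rw [rel_succ, Submodule.span_le]
    rintro x (⟨a', b, t, rfl⟩ | ⟨a', r, hr, rfl⟩) <;>
      apply Submodule.mem_comap.mpr <;> rw [rmulT_succ_apply]
    · rw [map_sub, LinearMap.lTensor_tmul, LinearMap.lTensor_tmul, ← lmulT_rmulT_comm]
      exact Submodule.subset_span (Or.inl ⟨a', b, rmulT A a n t, rfl⟩)
    · rw [LinearMap.lTensor_tmul]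
      exact Submodule.subset_span
        (Or.inr ⟨a', rmulT A a n r, rel_le_comap_rmulT B a n hr, rfl⟩)

/-- `CC B n` is `C_n(A,B) = A ⊗_B ⋯ ⊗_B A` (`n` factors of `A`), with `CC B 0 = B`. -/
noncomputable def CC (B : Subring A) : ℕ → ModuleCat.{u} ℤ
  | 0 => ModuleCat.of ℤ B
  | n + 1 => @ModuleCat.of ℤ _ ((Tpow A n : Type u) ⧸ rel B n) _ (Submodule.Quotient.module _)

/-- The left `A`-action on `C_{n+1}(A,B)`. -/
noncomputable def lA (B : Subring A) (a : A) (n : ℕ) :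
    (CC B (n+1) : Type u) →ₗ[ℤ] (CC B (n+1) : Type u) :=
  Submodule.mapQ _ _ (lmulT A a n) (rel_le_comap_lmulT B a n)

/-- The right `A`-action on `C_{n+1}(A,B)`. -/
noncomputable def rA (B : Subring A) (a : A) (n : ℕ) :
    (CC B (n+1) : Type u) →ₗ[ℤ] (CC B (n+1) : Type u) :=
  Submodule.mapQ _ _ (rmulT A a n) (rel_le_comap_rmulT B a n)

/-- The left `B`-action on `C_n(A,B)`. -/
noncomputable def lB (B : Subring A) (b : B) : ∀ n, (CC B n : Type u) →ₗ[ℤ] (CC B n : Type u)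
  | 0 => (LinearMap.mulLeft ℤ b : B →ₗ[ℤ] B)
  | n + 1 => lA B (b : A) n

/-- The right `B`-action on `C_n(A,B)`. -/
noncomputable def rB (B : Subring A) (b : B) : ∀ n, (CC B n : Type u) →ₗ[ℤ] (CC B n : Type u)
  | 0 => (LinearMap.mulRight ℤ b : B →ₗ[ℤ] B)
  | n + 1 => rA B (b : A) n

/-- `f` is a morphism of `B`-`B`-bimodules `C_m(A,B) → C_n(A,B)`. -/
def IsBBHom (B : Subring A) {m n : ℕ} (f : (CC B m : Type u) →ₗ[ℤ] (CC B n : Type u)) : Prop :=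
  ∀ b : B, (∀ x, f (lB B b m x) = lB B b n (f x)) ∧ (∀ x, f (rB B b m x) = rB B b n (f x))

/-- `f` is a morphism of `A`-`B`-bimodules `C_{m+1}(A,B) → C_{n+1}(A,B)`. -/
def IsABHom (B : Subring A) {m n : ℕ}
    (f : (CC B (m+1) : Type u) →ₗ[ℤ] (CC B (n+1) : Type u)) : Prop :=
  (∀ (a : A) x, f (lA B a m x) = lA B a n (f x)) ∧
  (∀ (b : B) x, f (rB B b (m+1) x) = rB B b (n+1) (f x))

/-- `f` is a morphism of `B`-`A`-bimodules `C_{m+1}(A,B) → C_{n+1}(A,B)`. -/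
def IsBAHom (B : Subring A) {m n : ℕ}
    (f : (CC B (m+1) : Type u) →ₗ[ℤ] (CC B (n+1) : Type u)) : Prop :=
  (∀ (b : B) x, f (lB B b (m+1) x) = lB B b (n+1) (f x)) ∧
  (∀ (a : A) x, f (rA B a m x) = rA B a n (f x))

/-- `C_m(A,B)` divides a multiple of `C_n(A,B)` as `B`-`B`-bimodules. -/
def DividesBB (B : Subring A) (m n : ℕ) : Prop :=
  ∃ (r : ℕ) (f : Fin r → ((CC B m : Type u) →ₗ[ℤ] (CC B n : Type u)))
    (g : Fin r → ((CC B n : Type u) →ₗ[ℤ] (CC B m : Type u))),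
    (∀ i, IsBBHom B (f i)) ∧ (∀ i, IsBBHom B (g i)) ∧
      ∑ i, (g i).comp (f i) = LinearMap.id

/-- `C_{m+1}(A,B)` divides a multiple of `C_{n+1}(A,B)` as `A`-`B`-bimodules. -/
def DividesAB (B : Subring A) (m n : ℕ) : Prop :=
  ∃ (r : ℕ) (f : Fin r → ((CC B (m+1) : Type u) →ₗ[ℤ] (CC B (n+1) : Type u)))
    (g : Fin r → ((CC B (n+1) : Type u) →ₗ[ℤ] (CC B (m+1) : Type u))),
    (∀ i, IsABHom B (f i)) ∧ (∀ i, IsABHom B (g i)) ∧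
      ∑ i, (g i).comp (f i) = LinearMap.id

/-- `C_{m+1}(A,B)` divides a multiple of `C_{n+1}(A,B)` as `B`-`A`-bimodules. -/
def DividesBA (B : Subring A) (m n : ℕ) : Prop :=
  ∃ (r : ℕ) (f : Fin r → ((CC B (m+1) : Type u) →ₗ[ℤ] (CC B (n+1) : Type u)))
    (g : Fin r → ((CC B (n+1) : Type u) →ₗ[ℤ] (CC B (m+1) : Type u))),
    (∀ i, IsBAHom B (f i)) ∧ (∀ i, IsBAHom B (g i)) ∧
      ∑ i, (g i).comp (f i) = LinearMap.id

/-- H-equivalence of `C_m` and `C_n` as `B`-`B`-bimodules. -/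
def HequivBB (B : Subring A) (m n : ℕ) : Prop := DividesBB B m n ∧ DividesBB B n m

/-- H-equivalence of `C_{m+1}` and `C_{n+1}` as `A`-`B`-bimodules. -/
def HequivAB (B : Subring A) (m n : ℕ) : Prop := DividesAB B m n ∧ DividesAB B n m

/-- H-equivalence of `C_{m+1}` and `C_{n+1}` as `B`-`A`-bimodules. -/
def HequivBA (B : Subring A) (m n : ℕ) : Prop := DividesBA B m n ∧ DividesBA B n m

/-- The extension `B ⊆ A` has depth `d`: depth `2n+1` (`n ≥ 0`) means
`C_{n+1} ∼ C_n` as `B`-`B`-bimodules, and right (resp. left) depth `2n` (`n ≥ 1`)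
means `C_{n+1} ∼ C_n` as `A`-`B`- (resp. `B`-`A`-) bimodules. -/
def HasDepth (B : Subring A) (d : ℕ) : Prop :=
  (∃ n : ℕ, d = 2 * n + 1 ∧ HequivBB B (n+1) n) ∨
  (∃ n : ℕ, d = 2 * (n+1) ∧ (HequivAB B (n+1) n ∨ HequivBA B (n+1) n))

/-- The minimum depth `d(B,A) ∈ ℕ∞` of the subring extension `B ⊆ A`. -/
noncomputable def depth (B : Subring A) : ℕ∞ :=
  sInf {d : ℕ∞ | ∃ m : ℕ, HasDepth B m ∧ d = (m : ℕ∞)}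

section DivTheory
variable (R : Type*) [Ring R]

/-- `M` divides a finite multiple of `N` over `R`. -/
def Dvdd (M N : Type*) [AddCommGroup M] [Module R M] [AddCommGroup N] [Module R N] : Prop :=
  ∃ (r : ℕ) (f : Fin r → (M →ₗ[R] N)) (g : Fin r → (N →ₗ[R] M)),
    ∑ i, (g i).comp (f i) = LinearMap.id

variable {M N P : Type*} [AddCommGroup M] [Module R M] [AddCommGroup N] [Module R N]
  [AddCommGroup P] [Module R P]

theorem dvdd_of_fintype {ι : Type} [Fintype ι] (f : ι → (M →ₗ[R] N)) (g : ι → (N →ₗ[R] M))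
    (h : ∑ i, (g i).comp (f i) = LinearMap.id) : Dvdd R M N := by
  obtain ⟨e⟩ : Nonempty (Fin (Fintype.card ι) ≃ ι) := ⟨(Fintype.equivFin ι).symm⟩
  exact ⟨_, fun i => f (e i), fun i => g (e i), by
    rw [Fintype.sum_equiv e _ (fun j => (g j).comp (f j)) (fun i => rfl)]; exact h⟩

theorem Dvdd.refl : Dvdd R M M :=
  ⟨1, fun _ => LinearMap.id, fun _ => LinearMap.id, by simp⟩

theorem Dvdd.of_subsingleton [Subsingleton M] : Dvdd R M N :=
  ⟨0, fun i => i.elim0, fun i => i.elim0, by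
    ext x; exact (Subsingleton.elim _ _)⟩

theorem Dvdd.trans {R : Type*} [Ring R] {M N P : Type*} [AddCommGroup M] [Module R M]
    [AddCommGroup N] [Module R N] [AddCommGroup P] [Module R P]
    (h1 : Dvdd R M N) (h2 : Dvdd R N P) : Dvdd R M P := by
  obtain ⟨r, f, g, hfg⟩ := h1
  obtain ⟨s, u, v, huv⟩ := h2
  refine dvdd_of_fintype R (ι := Fin r × Fin s) (fun p => (u p.2).comp (f p.1))
    (fun p => (g p.1).comp (v p.2)) ?_
  have : ∀ p : Fin r × Fin s, ((g p.1).comp (v p.2)).comp ((u p.2).comp (f p.1))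
      = ((g p.1).comp ((v p.2).comp (u p.2))).comp (f p.1) := by
    intro p; ext x; simp [LinearMap.comp_apply]
  rw [Finset.sum_congr rfl (fun p _ => this p), Fintype.sum_prod_type]
  have h2 : ∀ i : Fin r, ∑ j : Fin s, (g i ∘ₗ v j ∘ₗ u j) ∘ₗ f i = g i ∘ₗ f i := by
    intro i; ext x
    have h3 := congrArg (fun (h : N →ₗ[R] N) => g i (h (f i x))) huv
    simpa [LinearMap.sum_apply, map_sum] using h3
  rw [Finset.sum_congr rfl (fun i _ => h2 i)]
  exact hfg
end DivTheory
section TpowLemmas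
variable (A : Type u) [Ring A]

private theorem mulLeft_add' (a b : A) :
    LinearMap.mulLeft ℤ (a + b) = LinearMap.mulLeft ℤ a + LinearMap.mulLeft ℤ b := by
  ext x; exact add_mul a b x

theorem lmulT_zero : ∀ n, lmulT A 0 n = 0
  | 0 => by
    show LinearMap.mulLeft ℤ (0:A) = 0
    exact LinearMap.mulLeft_zero_eq_zero ℤ A
  | n + 1 => by
    show LinearMap.rTensor (Tpow A n : Type u) (LinearMap.mulLeft ℤ (0:A)) = 0
    rw [LinearMap.mulLeft_zero_eq_zero]
    ext x y; simp

theorem lmulT_one : ∀ n, lmulT A 1 n = LinearMap.id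
  | 0 => by
    show LinearMap.mulLeft ℤ (1:A) = LinearMap.id
    exact LinearMap.mulLeft_one ℤ A
  | n + 1 => by
    show LinearMap.rTensor (Tpow A n : Type u) (LinearMap.mulLeft ℤ (1:A)) = LinearMap.id
    rw [LinearMap.mulLeft_one, LinearMap.rTensor_id]

theorem lmulT_mul (a b : A) : ∀ n, lmulT A (a * b) n = (lmulT A a n).comp (lmulT A b n)
  | 0 => by
    show LinearMap.mulLeft ℤ (a * b) = (LinearMap.mulLeft ℤ a).comp (LinearMap.mulLeft ℤ b)
    exact LinearMap.mulLeft_mul ℤ A a b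
  | n + 1 => by
    show LinearMap.rTensor (Tpow A n : Type u) (LinearMap.mulLeft ℤ (a*b)) = _
    rw [LinearMap.mulLeft_mul, LinearMap.rTensor_comp]; rfl

theorem lmulT_add (a b : A) : ∀ n, lmulT A (a + b) n = lmulT A a n + lmulT A b n
  | 0 => by
    show LinearMap.mulLeft ℤ (a + b) = LinearMap.mulLeft ℤ a + LinearMap.mulLeft ℤ b
    exact mulLeft_add' A a b
  | n + 1 => by
    show LinearMap.rTensor (Tpow A n : Type u) (LinearMap.mulLeft ℤ (a+b)) = _
    rw [mulLeft_add', LinearMap.rTensor_add]; rfl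

theorem rmulT_zero : ∀ n, rmulT A 0 n = 0
  | 0 => by
    show LinearMap.mulRight ℤ (0:A) = 0
    ext x; exact mul_zero x
  | n + 1 => by
    show LinearMap.lTensor A (rmulT A (0:A) n) = 0
    rw [rmulT_zero n]; ext x y; simp

theorem rmulT_one : ∀ n, rmulT A 1 n = LinearMap.id
  | 0 => by
    show LinearMap.mulRight ℤ (1:A) = LinearMap.id
    ext x; exact mul_one x
  | n + 1 => by
    show LinearMap.lTensor A (rmulT A (1:A) n) = LinearMap.id
    rw [rmulT_one n, LinearMap.lTensor_id]

theorem rmulT_mul (a b : A) : ∀ n, rmulT A (a * b) n = (rmulT A b n).comp (rmulT A a n)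
  | 0 => by
    show LinearMap.mulRight ℤ (a * b) =
      (LinearMap.mulRight ℤ b).comp (LinearMap.mulRight ℤ a)
    ext x; exact (mul_assoc x a b).symm
  | n + 1 => by
    show LinearMap.lTensor A (rmulT A (a*b) n) = _
    rw [rmulT_mul a b n, LinearMap.lTensor_comp]; rfl

theorem rmulT_add (a b : A) : ∀ n, rmulT A (a + b) n = rmulT A a n + rmulT A b n
  | 0 => by
    show LinearMap.mulRight ℤ (a + b) = LinearMap.mulRight ℤ a + LinearMap.mulRight ℤ b
    ext x; exact mul_add x a b
  | n + 1 => by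
    show LinearMap.lTensor A (rmulT A (a+b) n) = _
    rw [rmulT_add a b n, LinearMap.lTensor_add]; rfl

end TpowLemmas

section CCLemmas
variable {A : Type u} [Ring A] (B : Subring A)

theorem lA_apply_mk (a : A) (n : ℕ) (x : (Tpow A n : Type u)) :
    lA B a n (Submodule.Quotient.mk x) = Submodule.Quotient.mk (lmulT A a n x) := rfl

theorem rA_apply_mk (a : A) (n : ℕ) (x : (Tpow A n : Type u)) :
    rA B a n (Submodule.Quotient.mk x) = Submodule.Quotient.mk (rmulT A a n x) := rfl

theorem lA_zero (n : ℕ) : lA B 0 n = 0 := by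
  refine Submodule.linearMap_qext _ ?_
  ext x
  show lA B 0 n (Submodule.Quotient.mk x) = 0
  rw [lA_apply_mk, lmulT_zero]
  rfl

theorem lA_one (n : ℕ) : lA B 1 n = LinearMap.id := by
  refine Submodule.linearMap_qext _ ?_
  ext x
  show lA B 1 n (Submodule.Quotient.mk x) = Submodule.Quotient.mk x
  rw [lA_apply_mk, lmulT_one]
  rfl

theorem lA_mul (a b : A) (n : ℕ) : lA B (a * b) n = (lA B a n).comp (lA B b n) := by
  refine Submodule.linearMap_qext _ ?_
  ext x
  show lA B (a * b) n (Submodule.Quotient.mk x)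
      = lA B a n (lA B b n (Submodule.Quotient.mk x))
  rw [lA_apply_mk, lA_apply_mk, lA_apply_mk, lmulT_mul]
  rfl

theorem lA_add (a b : A) (n : ℕ) : lA B (a + b) n = lA B a n + lA B b n := by
  refine Submodule.linearMap_qext _ ?_
  ext x
  show lA B (a + b) n (Submodule.Quotient.mk x)
      = lA B a n (Submodule.Quotient.mk x) + lA B b n (Submodule.Quotient.mk x)
  rw [lA_apply_mk, lA_apply_mk, lA_apply_mk, lmulT_add]
  rfl

theorem rA_zero (n : ℕ) : rA B 0 n = 0 := by
  refine Submodule.linearMap_qext _ ?_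
  ext x
  show rA B 0 n (Submodule.Quotient.mk x) = 0
  rw [rA_apply_mk, rmulT_zero]
  rfl

theorem rA_one (n : ℕ) : rA B 1 n = LinearMap.id := by
  refine Submodule.linearMap_qext _ ?_
  ext x
  show rA B 1 n (Submodule.Quotient.mk x) = Submodule.Quotient.mk x
  rw [rA_apply_mk, rmulT_one]
  rfl

theorem rA_mul (a b : A) (n : ℕ) : rA B (a * b) n = (rA B b n).comp (rA B a n) := by
  refine Submodule.linearMap_qext _ ?_
  ext x
  show rA B (a * b) n (Submodule.Quotient.mk x)
      = rA B b n (rA B a n (Submodule.Quotient.mk x))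
  rw [rA_apply_mk, rA_apply_mk, rA_apply_mk, rmulT_mul]
  rfl

theorem rA_add (a b : A) (n : ℕ) : rA B (a + b) n = rA B a n + rA B b n := by
  refine Submodule.linearMap_qext _ ?_
  ext x
  show rA B (a + b) n (Submodule.Quotient.mk x)
      = rA B a n (Submodule.Quotient.mk x) + rA B b n (Submodule.Quotient.mk x)
  rw [rA_apply_mk, rA_apply_mk, rA_apply_mk, rmulT_add]
  rfl

theorem lA_rA_comm (a b : A) (n : ℕ) :
    (lA B a n).comp (rA B b n) = (rA B b n).comp (lA B a n) := by
  refine Submodule.linearMap_qext _ ?_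
  ext x
  show lA B a n (rA B b n (Submodule.Quotient.mk x))
      = rA B b n (lA B a n (Submodule.Quotient.mk x))
  rw [rA_apply_mk, lA_apply_mk, lA_apply_mk, rA_apply_mk, lmulT_rmulT_comm]

end CCLemmas

section MkC
variable {A : Type u} [Ring A] (B : Subring A)

/-- The quotient map `Tpow A n → C_{n+1}` as a linear map, with the `CC`-form type. -/
noncomputable def mkCL (n : ℕ) : (Tpow A n : Type u) →ₗ[ℤ] (CC B (n+1) : Type u) :=
  (rel B n).mkQ

theorem mkCL_apply (n : ℕ) (x : (Tpow A n : Type u)) :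
    mkCL B n x = Submodule.Quotient.mk x := rfl

theorem mkCL_surjective (n : ℕ) : Function.Surjective (mkCL B n) :=
  Submodule.Quotient.mk_surjective _

theorem lA_mkCL (a : A) (n : ℕ) (x : (Tpow A n : Type u)) :
    lA B a n (mkCL B n x) = mkCL B n (lmulT A a n x) := rfl

theorem rA_mkCL (a : A) (n : ℕ) (x : (Tpow A n : Type u)) :
    rA B a n (mkCL B n x) = mkCL B n (rmulT A a n x) := rfl

end MkC
section UnitMult
variable {A : Type u} [Ring A] (B : Subring A)

/-- `t ↦ 1 ⊗ t` on tensor powers. -/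
noncomputable def uT (n : ℕ) : (Tpow A n : Type u) →ₗ[ℤ] (Tpow A (n+1) : Type u) :=
  TensorProduct.mk ℤ A (Tpow A n : Type u) 1

theorem uT_apply (n : ℕ) (t : (Tpow A n : Type u)) : uT n t = (1:A) ⊗ₜ[ℤ] t := rfl

/-- the multiplication `a ⊗ t ↦ a ⬝ t` on tensor powers. -/
noncomputable def mT (n : ℕ) : (Tpow A (n+1) : Type u) →ₗ[ℤ] (Tpow A n : Type u) :=
  TensorProduct.lift (LinearMap.mk₂ ℤ (fun a t => lmulT A a n t)
    (fun a b t => by rw [lmulT_add, LinearMap.add_apply])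
    (fun z a t => (map_zsmul (AddMonoidHom.mk' (fun a => lmulT A a n t)
      (fun a b => by rw [lmulT_add, LinearMap.add_apply])) z a).trans
        (int_smul_eq_zsmul _ z _).symm)
    (fun a t t' => map_add _ t t')
    (fun z a t => (lmulT A a n).map_smul z t))

theorem mT_apply (n : ℕ) (a : A) (t : (Tpow A n : Type u)) :
    mT n (a ⊗ₜ[ℤ] t) = lmulT A a n t := rfl

theorem uT_rel (n : ℕ) : rel B n ≤ (rel B (n+1)).comap (uT n) := by
  intro x hx
  exact Submodule.subset_span (Or.inr ⟨1, x, hx, rfl⟩)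

theorem mT_rel (n : ℕ) : rel B (n+1) ≤ (rel B n).comap (mT n) := by
  rw [rel_succ, Submodule.span_le]
  rintro x (⟨a, b, t, rfl⟩ | ⟨a, r, hr, rfl⟩) <;>
    apply Submodule.mem_comap.mpr
  · erw [map_sub, mT_apply, mT_apply, lmulT_mul]
    simp only [LinearMap.comp_apply, sub_self]
    have h0 : lmulT A a n (lmulT A (b:A) n t) - mT n (a ⊗ₜ[ℤ] lmulT A (b:A) n t) = 0 :=
      sub_eq_zero.mpr rfl
    rw [h0]
    exact (rel B n).zero_mem
  · erw [mT_apply]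
    exact rel_le_comap_lmulT B a n hr

/-- unit map `C_{n+1} → C_{n+2}`, `x ↦ 1 ⊗ x`. -/
noncomputable def uC (n : ℕ) : (CC B (n+1) : Type u) →ₗ[ℤ] (CC B (n+2) : Type u) :=
  Submodule.mapQ _ _ (uT n) (uT_rel B n)

/-- multiplication map `C_{n+2} → C_{n+1}`. -/
noncomputable def mC (n : ℕ) : (CC B (n+2) : Type u) →ₗ[ℤ] (CC B (n+1) : Type u) :=
  Submodule.mapQ _ _ (mT n) (mT_rel B n)

theorem uC_apply_mk (n : ℕ) (t : (Tpow A n : Type u)) :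
    uC B n (Submodule.Quotient.mk t) = Submodule.Quotient.mk ((1:A) ⊗ₜ[ℤ] t) := rfl

theorem mC_apply_mk (n : ℕ) (x : (Tpow A (n+1) : Type u)) :
    mC B n (Submodule.Quotient.mk x) = Submodule.Quotient.mk (mT n x) := rfl

theorem mC_uC (n : ℕ) : (mC B n).comp (uC B n) = LinearMap.id := by
  refine Submodule.linearMap_qext _ ?_
  ext t
  show mC B n (uC B n (Submodule.Quotient.mk t)) = Submodule.Quotient.mk t
  erw [uC_apply_mk, mC_apply_mk, mT_apply, lmulT_one]
  rfl

theorem uC_lB (n : ℕ) (b : B) :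
    (uC B n).comp (lA B (b:A) n) = (lA B (b:A) (n+1)).comp (uC B n) := by
  refine Submodule.linearMap_qext _ ?_
  ext t
  show uC B n (lA B (b:A) n (Submodule.Quotient.mk t))
      = lA B (b:A) (n+1) (uC B n (Submodule.Quotient.mk t))
  rw [lA_apply_mk, uC_apply_mk, uC_apply_mk]
  erw [lA_apply_mk B (b:A) (n+1) ((1:A) ⊗ₜ[ℤ] t), Submodule.Quotient.eq]
  have : lmulT A (b:A) (n+1) ((1:A) ⊗ₜ[ℤ] t) = ((b:A) * 1) ⊗ₜ[ℤ] t := by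
    rw [lmulT_succ_apply, LinearMap.rTensor_tmul]; rfl
  rw [this, mul_one]
  have h : ((1:A) * (b:A)) ⊗ₜ[ℤ] t - (1:A) ⊗ₜ[ℤ] (lmulT A (b:A) n t) ∈ rel B (n+1) :=
    Submodule.subset_span (Or.inl ⟨1, b, t, rfl⟩)
  rw [one_mul] at h
  have h2 := (rel B (n+1)).neg_mem h
  erw [neg_sub] at h2
  exact h2

theorem uC_rA (n : ℕ) (a : A) :
    (uC B n).comp (rA B a n) = (rA B a (n+1)).comp (uC B n) := by
  refine Submodule.linearMap_qext _ ?_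
  ext t
  show uC B n (rA B a n (Submodule.Quotient.mk t))
      = rA B a (n+1) (uC B n (Submodule.Quotient.mk t))
  rw [rA_apply_mk, uC_apply_mk, uC_apply_mk]
  rfl

theorem mC_lA (n : ℕ) (a : A) :
    (mC B n).comp (lA B a (n+1)) = (lA B a n).comp (mC B n) := by
  refine Submodule.linearMap_qext _ ?_
  refine LinearMap.ext fun x => ?_
  show mC B n (lA B a (n+1) (Submodule.Quotient.mk x))
      = lA B a n (mC B n (Submodule.Quotient.mk x))
  rw [lA_apply_mk, mC_apply_mk, mC_apply_mk, lA_apply_mk]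
  congr 1
  induction x using TensorProduct.induction_on with
  | zero => erw [map_zero, map_zero]
  | tmul c t =>
      rw [lmulT_succ_apply, LinearMap.rTensor_tmul, mT_apply]
      show lmulT A (a * c) n t = lmulT A a n (lmulT A c n t)
      rw [lmulT_mul]
      rfl
  | add y z hy hz => erw [map_add, map_add, map_add, map_add, hy, hz]

theorem mC_rA (n : ℕ) (a : A) :
    (mC B n).comp (rA B a (n+1)) = (rA B a n).comp (mC B n) := by
  refine Submodule.linearMap_qext _ ?_
  refine LinearMap.ext fun x => ?_
  show mC B n (rA B a (n+1) (Submodule.Quotient.mk x))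
      = rA B a n (mC B n (Submodule.Quotient.mk x))
  rw [rA_apply_mk, mC_apply_mk, mC_apply_mk, rA_apply_mk]
  congr 1
  induction x using TensorProduct.induction_on with
  | zero => erw [map_zero, map_zero]
  | tmul c t =>
      rw [rmulT_succ_apply, LinearMap.lTensor_tmul, mT_apply, mT_apply]
      rw [lmulT_rmulT_comm]
  | add y z hy hz => erw [map_add, map_add, map_add, map_add, hy, hz]

/-- `C_{n+1}` divides `C_{n+2}` as `B`-`B`-bimodules. -/
theorem dividesBB_succ (n : ℕ) : DividesBB B (n+1) (n+2) := by
  refine ⟨1, fun _ => uC B n, fun _ => mC B n, ?_, ?_, by simpa using mC_uC B n⟩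
  · intro i
    intro b
    constructor
    · intro x
      exact congrFun (congrArg (fun (h : _ →ₗ[ℤ] _) => (h : _ → _)) (uC_lB B n b)) x
    · intro x
      exact congrFun (congrArg (fun (h : _ →ₗ[ℤ] _) => (h : _ → _)) (uC_rA B n (b:A))) x
  · intro i
    intro b
    constructor
    · intro x
      exact congrFun (congrArg (fun (h : _ →ₗ[ℤ] _) => (h : _ → _)) (mC_lA B n (b:A))) x
    · intro x
      exact congrFun (congrArg (fun (h : _ →ₗ[ℤ] _) => (h : _ → _)) (mC_rA B n (b:A))) x
end UnitMult

section MkC2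
variable {A : Type u} [Ring A] (B : Subring A)

theorem uC_mkCL (n : ℕ) (t : (Tpow A n : Type u)) :
    uC B n (mkCL B n t) = mkCL B (n+1) ((1:A) ⊗ₜ[ℤ] t) := rfl

theorem mC_mkCL (n : ℕ) (x : (Tpow A (n+1) : Type u)) :
    mC B n (mkCL B (n+1) x) = mkCL B n (mT n x) := rfl

end MkC2
section BeStructure
variable {k : Type u} [Field k] {A : Type u} [Ring A] [Algebra k A] (B : Subalgebra k A)

theorem lmulT_sub_rmulT_central (c : k) :
    ∀ n (t : (Tpow A n : Type u)),
      lmulT A (algebraMap k A c) n t - rmulT A (algebraMap k A c) n t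
        ∈ rel B.toSubring n
  | 0, t => by
    have h0 : ∀ s : A, lmulT A (algebraMap k A c) 0 s - rmulT A (algebraMap k A c) 0 s = 0 := by
      intro s
      show algebraMap k A c * s - s * algebraMap k A c = 0
      rw [Algebra.commutes c s, sub_self]
    rw [h0 t]
    exact (rel B.toSubring 0).zero_mem
  | n + 1, t => by
    induction t using TensorProduct.induction_on with
    | zero =>
        erw [map_zero, sub_zero]
        exact (rel B.toSubring (n+1)).zero_mem
    | tmul a s =>
        set e := algebraMap k A c with he
        have h1 : lmulT A e (n+1) (a ⊗ₜ[ℤ] s) = (e * a) ⊗ₜ[ℤ] s := by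
          rw [lmulT_succ_apply, LinearMap.rTensor_tmul]; rfl
        have h2 : rmulT A e (n+1) (a ⊗ₜ[ℤ] s) = a ⊗ₜ[ℤ] (rmulT A e n s) := by
          rw [rmulT_succ_apply, LinearMap.lTensor_tmul]
        rw [h1, h2]
        have key : (e * a) ⊗ₜ[ℤ] s - a ⊗ₜ[ℤ] (rmulT A e n s)
            = ((a * e) ⊗ₜ[ℤ] s - a ⊗ₜ[ℤ] (lmulT A e n s))
              + (a ⊗ₜ[ℤ] (lmulT A e n s - rmulT A e n s)) := by
          rw [TensorProduct.tmul_sub, Algebra.commutes c a]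
          abel
        erw [key]
        refine (rel B.toSubring (n+1)).add_mem ?_ ?_
        · exact Submodule.subset_span
            (Or.inl ⟨a, ⟨e, B.algebraMap_mem c⟩, s, rfl⟩)
        · exact Submodule.subset_span
            (Or.inr ⟨a, _, lmulT_sub_rmulT_central c n s, rfl⟩)
    | add y z hy hz =>
        erw [map_add, map_add]
        have : lmulT A (algebraMap k A c) (n+1) y + lmulT A (algebraMap k A c) (n+1) z
            - (rmulT A (algebraMap k A c) (n+1) y + rmulT A (algebraMap k A c) (n+1) z)
            = (lmulT A (algebraMap k A c) (n+1) y - rmulT A (algebraMap k A c) (n+1) y)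
              + (lmulT A (algebraMap k A c) (n+1) z - rmulT A (algebraMap k A c) (n+1) z) := by
          abel
        rw [this]
        exact (rel B.toSubring (n+1)).add_mem hy hz

theorem lA_central (c : k) (n : ℕ) :
    lA B.toSubring (algebraMap k A c) n = rA B.toSubring (algebraMap k A c) n := by
  refine Submodule.linearMap_qext _ ?_
  ext t
  show lA B.toSubring _ n (Submodule.Quotient.mk t)
      = rA B.toSubring _ n (Submodule.Quotient.mk t)
  erw [lA_apply_mk, rA_apply_mk, Submodule.Quotient.eq]
  exact lmulT_sub_rmulT_central B c n t

/-- The ring homomorphism `A → End(C_{n+1})` given by left multiplication. -/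
noncomputable def lRingHom (n : ℕ) :
    A →+* Module.End ℤ (CC B.toSubring (n+1) : Type u) where
  toFun a := lA B.toSubring a n
  map_one' := lA_one _ n
  map_mul' a b := lA_mul _ a b n
  map_zero' := lA_zero _ n
  map_add' a b := lA_add _ a b n

/-- The canonical `k`-module structure on `C_{n+1}`. -/
noncomputable instance instModk (n : ℕ) :
    Module k (CC B.toSubring (n+1) : Type u) :=
  Module.compHom _ ((lRingHom B n).comp (algebraMap k A))

theorem k_smul_def (n : ℕ) (c : k) (x : (CC B.toSubring (n+1) : Type u)) :
    c • x = lA B.toSubring (algebraMap k A c) n x := rfl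

/-- Left multiplication as `k`-linear endomorphism. -/
noncomputable def lAk (a : A) (n : ℕ) :
    (CC B.toSubring (n+1) : Type u) →ₗ[k] (CC B.toSubring (n+1) : Type u) where
  toFun := lA B.toSubring a n
  map_add' := (lA B.toSubring a n).map_add
  map_smul' c x := by
    simp only [RingHom.id_apply, k_smul_def]
    rw [← LinearMap.comp_apply, ← lA_mul, ← Algebra.commutes c a, lA_mul]
    rfl

/-- Right multiplication as `k`-linear endomorphism. -/
noncomputable def rAk (a : A) (n : ℕ) :
    (CC B.toSubring (n+1) : Type u) →ₗ[k] (CC B.toSubring (n+1) : Type u) where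
  toFun := rA B.toSubring a n
  map_add' := (rA B.toSubring a n).map_add
  map_smul' c x := by
    simp only [RingHom.id_apply, k_smul_def]
    rw [← LinearMap.comp_apply, ← lA_rA_comm]
    rfl

theorem lAk_apply (a : A) (n : ℕ) (x) : lAk B a n x = lA B.toSubring a n x := rfl
theorem rAk_apply (a : A) (n : ℕ) (x) : rAk B a n x = rA B.toSubring a n x := rfl

/-- Left regular action of `B` on `C_{n+1}` as a `k`-algebra homomorphism. -/
noncomputable def lActAlg (n : ℕ) :
    ↥B →ₐ[k] Module.End k (CC B.toSubring (n+1) : Type u) where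
  toFun b := lAk B (b : A) n
  map_one' := by ext x; show lA B.toSubring ((1:↥B):A) n x = x
                 rw [OneMemClass.coe_one, lA_one]; rfl
  map_mul' b b' := by
    ext x
    show lA B.toSubring ((↑(b * b') : A)) n x = lAk B (b:A) n (lAk B (b':A) n x)
    rw [MulMemClass.coe_mul, lA_mul]; rfl
  map_zero' := by ext x; show lA B.toSubring ((0:↥B):A) n x = 0
                  rw [ZeroMemClass.coe_zero, lA_zero]; rfl
  map_add' b b' := by
    ext x
    show lA B.toSubring ((↑(b + b') : A)) n x = lAk B (b:A) n x + lAk B (b':A) n x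
    rw [AddMemClass.coe_add, lA_add]; rfl
  commutes' c := by
    ext x
    show lA B.toSubring ((algebraMap k ↥B c : ↥B) : A) n x = _
    have : ((algebraMap k ↥B c : ↥B) : A) = algebraMap k A c := by
      simp [Subalgebra.coe_algebraMap]
    rw [this]
    show lA B.toSubring (algebraMap k A c) n x = (algebraMap k (Module.End k _) c) x
    rw [Module.algebraMap_end_apply, k_smul_def]

/-- Right regular action of `Bᵐᵒᵖ` on `C_{n+1}` as a `k`-algebra homomorphism. -/
noncomputable def rActAlg (n : ℕ) :
    (↥B)ᵐᵒᵖ →ₐ[k] Module.End k (CC B.toSubring (n+1) : Type u) where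
  toFun b := rAk B ((b.unop : ↥B) : A) n
  map_one' := by
    ext x; show rA B.toSubring (((1:(↥B)ᵐᵒᵖ).unop : ↥B) : A) n x = x
    rw [show (((1:(↥B)ᵐᵒᵖ).unop : ↥B) : A) = (1:A) by simp, rA_one]; rfl
  map_mul' b b' := by
    ext x
    show rA B.toSubring (((b * b').unop : ↥B) : A) n x
        = rAk B ((b.unop : ↥B):A) n (rAk B ((b'.unop : ↥B):A) n x)
    have : (((b * b').unop : ↥B) : A) = ((b'.unop : ↥B) : A) * ((b.unop : ↥B) : A) := by
      simp
    rw [this, rA_mul]; rfl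
  map_zero' := by
    ext x; show rA B.toSubring (((0:(↥B)ᵐᵒᵖ).unop : ↥B) : A) n x = 0
    rw [show (((0:(↥B)ᵐᵒᵖ).unop : ↥B) : A) = (0:A) by simp, rA_zero]; rfl
  map_add' b b' := by
    ext x
    show rA B.toSubring (((b + b').unop : ↥B) : A) n x = _
    have : (((b + b').unop : ↥B) : A) = ((b.unop : ↥B) : A) + ((b'.unop : ↥B) : A) := by
      simp
    rw [this, rA_add]; rfl
  commutes' c := by
    ext x
    have : (((algebraMap k (↥B)ᵐᵒᵖ c).unop : ↥B) : A) = algebraMap k A c := by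
      simp [Subalgebra.coe_algebraMap]
    show rA B.toSubring (((algebraMap k (↥B)ᵐᵒᵖ c).unop : ↥B) : A) n x = _
    rw [this, ← lA_central]
    show lA B.toSubring (algebraMap k A c) n x = (algebraMap k (Module.End k _) c) x
    rw [Module.algebraMap_end_apply, k_smul_def]

/-- The action of the enveloping algebra `B ⊗ₖ Bᵐᵒᵖ` on `C_{n+1}`. -/
noncomputable def PhiBe (n : ℕ) :
    (↥B ⊗[k] (↥B)ᵐᵒᵖ) →ₐ[k] Module.End k (CC B.toSubring (n+1) : Type u) :=
  Algebra.TensorProduct.lift (lActAlg B n) (rActAlg B n) (by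
    intro b b'
    show _ * _ = _ * _
    ext x
    show lA B.toSubring (b:A) n (rA B.toSubring _ n x)
        = rA B.toSubring _ n (lA B.toSubring (b:A) n x)
    rw [← LinearMap.comp_apply, lA_rA_comm]
    rfl
    )

noncomputable instance instModBe (n : ℕ) :
    Module (↥B ⊗[k] (↥B)ᵐᵒᵖ) (CC B.toSubring (n+1) : Type u) :=
  Module.compHom _ (PhiBe B n).toRingHom

theorem Be_smul_def (n : ℕ) (x : ↥B ⊗[k] (↥B)ᵐᵒᵖ)
    (m : (CC B.toSubring (n+1) : Type u)) : x • m = PhiBe B n x m := rfl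

theorem Be_tmul_smul (n : ℕ) (b b' : ↥B) (m : (CC B.toSubring (n+1) : Type u)) :
    (b ⊗ₜ[k] (MulOpposite.op b')) • m
      = lA B.toSubring (b:A) n (rA B.toSubring (b':A) n m) := by
  rw [Be_smul_def, PhiBe, Algebra.TensorProduct.lift_tmul]
  rfl

instance instTower (n : ℕ) :
    IsScalarTower k (↥B ⊗[k] (↥B)ᵐᵒᵖ) (CC B.toSubring (n+1) : Type u) := by
  constructor
  intro c x m
  show (PhiBe B n (c • x)) m = c • (PhiBe B n x) m
  have h1 : PhiBe B n (c • x) = c • PhiBe B n x :=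
    map_smul (PhiBe B n).toLinearMap c x
  rw [h1]
  rfl

end BeStructure
section Finiteness
variable {k : Type u} [Field k] {A : Type u} [Ring A] [Algebra k A] (B : Subalgebra k A)

theorem k_smul_mkCL (n : ℕ) (c : k) (x : (Tpow A n : Type u)) :
    c • mkCL B.toSubring n x
      = mkCL B.toSubring n (lmulT A (algebraMap k A c) n x) := by
  rw [k_smul_def, lA_mkCL]

/-- The unit map as a `k`-linear map. -/
noncomputable def uCk (n : ℕ) :
    (CC B.toSubring (n+1) : Type u) →ₗ[k] (CC B.toSubring (n+2) : Type u) where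
  toFun := uC B.toSubring n
  map_add' := (uC B.toSubring n).map_add
  map_smul' c x := by
    simp only [RingHom.id_apply, k_smul_def]
    exact LinearMap.congr_fun
      (uC_lB B.toSubring n ⟨algebraMap k A c, B.algebraMap_mem c⟩) x

theorem finite_k_Q [FiniteDimensional k A] :
    ∀ n, Module.Finite k (CC B.toSubring (n+1) : Type u)
  | 0 => by
    let ψ : A →ₗ[k] (CC B.toSubring 1 : Type u) :=
      { toFun := fun a => mkCL B.toSubring 0 a
        map_add' := fun a b => (mkCL B.toSubring 0).map_add a b
        map_smul' := fun c a => by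
          simp only [RingHom.id_apply]
          erw [k_smul_mkCL]
          congr 1
          show c • a = algebraMap k A c * a
          exact Algebra.smul_def c a }
    refine Module.Finite.of_surjective ψ ?_
    intro y
    obtain ⟨x, rfl⟩ := mkCL_surjective B.toSubring 0 y
    exact ⟨x, rfl⟩
  | n + 1 => by
    have IH : Module.Finite k (CC B.toSubring (n+1) : Type u) := finite_k_Q n
    obtain ⟨d, s, hs⟩ := Module.Finite.exists_fin (R := k) (M := A)
    let φ : Fin d → ((CC B.toSubring (n+1) : Type u) →ₗ[k] (CC B.toSubring (n+2) : Type u)) :=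
      fun i => (lAk B (s i) (n+1)).comp (uCk B n)
    have hφ : ∀ i (t : (Tpow A n : Type u)),
        φ i (mkCL B.toSubring n t) = mkCL B.toSubring (n+1) ((s i : A) ⊗ₜ[ℤ] t) := by
      intro i t
      show lA B.toSubring (s i) (n+1) (uC B.toSubring n (mkCL B.toSubring n t))
          = mkCL B.toSubring (n+1) ((s i : A) ⊗ₜ[ℤ] t)
      erw [uC_mkCL, lA_mkCL]
      congr 1
      rw [lmulT_succ_apply, LinearMap.rTensor_tmul]
      show (s i * 1) ⊗ₜ[ℤ] t = (s i : A) ⊗ₜ[ℤ] t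
      rw [mul_one]
    let Ψ : (Fin d → (CC B.toSubring (n+1) : Type u)) →ₗ[k] (CC B.toSubring (n+2) : Type u) :=
      ∑ i, (φ i).comp (LinearMap.proj i)
    refine Module.Finite.of_surjective Ψ ?_
    intro y
    obtain ⟨x, rfl⟩ := mkCL_surjective B.toSubring (n+1) y
    suffices h : mkCL B.toSubring (n+1) x ∈ LinearMap.range Ψ by
      obtain ⟨v, hv⟩ := h; exact ⟨v, hv⟩
    induction x using TensorProduct.induction_on with
    | zero => erw [map_zero]; exact (LinearMap.range Ψ).zero_mem
    | tmul a t =>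
        have ha : a ∈ Submodule.span k (Set.range s) := hs ▸ Submodule.mem_top
        obtain ⟨c, hc⟩ := (Submodule.mem_span_range_iff_exists_fun k).mp ha
        refine ⟨fun i => c i • mkCL B.toSubring n t, ?_⟩
        have h1 : Ψ (fun i => c i • mkCL B.toSubring n t)
            = ∑ i, φ i (c i • mkCL B.toSubring n t) := by
          show (∑ i, (φ i).comp (LinearMap.proj i)) _ = _
          rw [LinearMap.sum_apply]
          rfl
        rw [h1]
        have h2 : ∀ i, φ i (c i • mkCL B.toSubring n t)
            = mkCL B.toSubring (n+1) (((c i • s i : A)) ⊗ₜ[ℤ] t) := by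
          intro i
          erw [map_smul, hφ, k_smul_mkCL]
          congr 1
          rw [lmulT_succ_apply, LinearMap.rTensor_tmul]
          show (algebraMap k A (c i) * s i) ⊗ₜ[ℤ] t = (c i • s i) ⊗ₜ[ℤ] t
          rw [← Algebra.smul_def]
        rw [Finset.sum_congr rfl (fun i _ => h2 i)]
        have h3 : ∑ i, mkCL B.toSubring (n+1) (((c i • s i : A)) ⊗ₜ[ℤ] t)
            = mkCL B.toSubring (n+1) ((∑ i, c i • s i : A) ⊗ₜ[ℤ] t) := by
          rw [TensorProduct.sum_tmul]
          exact (map_sum (mkCL B.toSubring (n+1))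
            (fun i => (c i • s i : A) ⊗ₜ[ℤ] t) Finset.univ).symm
        rw [h3, hc]
    | add y z hy hz =>
        erw [map_add]
        exact (LinearMap.range Ψ).add_mem hy hz

theorem finite_Be_Q [FiniteDimensional k A] (n : ℕ) :
    Module.Finite (↥B ⊗[k] (↥B)ᵐᵒᵖ) (CC B.toSubring (n+1) : Type u) := by
  have := finite_k_Q B n
  exact Module.Finite.of_restrictScalars_finite k (↥B ⊗[k] (↥B)ᵐᵒᵖ) _

end Finiteness
section Bridge
variable {k : Type u} [Field k] {A : Type u} [Ring A] [Algebra k A] (B : Subalgebra k A)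

theorem Be_tmul_smul' (n : ℕ) (b : ↥B) (y : (↥B)ᵐᵒᵖ)
    (m : (CC B.toSubring (n+1) : Type u)) :
    (b ⊗ₜ[k] y) • m
      = lA B.toSubring (b:A) n (rA B.toSubring ((y.unop : ↥B):A) n m) := by
  rw [Be_smul_def, PhiBe, Algebra.TensorProduct.lift_tmul]
  rfl

theorem smul_tmul_one (n : ℕ) (b : ↥B) (m : (CC B.toSubring (n+1) : Type u)) :
    (b ⊗ₜ[k] (1:(↥B)ᵐᵒᵖ)) • m = lA B.toSubring (b:A) n m := by
  rw [Be_tmul_smul']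
  have : (((1:(↥B)ᵐᵒᵖ).unop : ↥B) : A) = (1:A) := by simp
  rw [this, rA_one]
  rfl

theorem smul_one_tmul (n : ℕ) (b : ↥B) (m : (CC B.toSubring (n+1) : Type u)) :
    ((1:↥B) ⊗ₜ[k] (MulOpposite.op b)) • m = rA B.toSubring (b:A) n m := by
  rw [Be_tmul_smul']
  have h1 : (((1:↥B):A)) = (1:A) := rfl
  rw [MulOpposite.unop_op, h1, lA_one]
  rfl

/-- The unit map as a `B^e`-linear map. -/
noncomputable def uCBe (n : ℕ) :
    (CC B.toSubring (n+1) : Type u) →ₗ[↥B ⊗[k] (↥B)ᵐᵒᵖ] (CC B.toSubring (n+2) : Type u) where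
  toFun := uC B.toSubring n
  map_add' := (uC B.toSubring n).map_add
  map_smul' x m := by
    simp only [RingHom.id_apply]
    induction x using TensorProduct.induction_on with
    | zero => rw [Be_smul_def, Be_smul_def, map_zero, LinearMap.zero_apply, map_zero, map_zero, LinearMap.zero_apply]
    | tmul b y =>
        rw [Be_tmul_smul', Be_tmul_smul']
        have hl : ∀ z, uC B.toSubring n (lA B.toSubring (b:A) n z)
            = lA B.toSubring (b:A) (n+1) (uC B.toSubring n z) :=
          fun z => LinearMap.congr_fun (uC_lB B.toSubring n b) z
        have hr : ∀ z, uC B.toSubring n (rA B.toSubring ((y.unop : ↥B):A) n z)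
            = rA B.toSubring ((y.unop : ↥B):A) (n+1) (uC B.toSubring n z) :=
          fun z => LinearMap.congr_fun (uC_rA B.toSubring n _) z
        rw [hl, hr]
    | add x₁ x₂ h1 h2 => rw [add_smul, add_smul, map_add, h1, h2]

/-- The multiplication map as a `B^e`-linear map. -/
noncomputable def mCBe (n : ℕ) :
    (CC B.toSubring (n+2) : Type u) →ₗ[↥B ⊗[k] (↥B)ᵐᵒᵖ] (CC B.toSubring (n+1) : Type u) where
  toFun := mC B.toSubring n
  map_add' := (mC B.toSubring n).map_add
  map_smul' x m := by
    simp only [RingHom.id_apply]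
    induction x using TensorProduct.induction_on with
    | zero => rw [Be_smul_def, Be_smul_def, map_zero, LinearMap.zero_apply, map_zero, map_zero, LinearMap.zero_apply]
    | tmul b y =>
        rw [Be_tmul_smul', Be_tmul_smul']
        have hl : ∀ z, mC B.toSubring n (lA B.toSubring (b:A) (n+1) z)
            = lA B.toSubring (b:A) n (mC B.toSubring n z) :=
          fun z => LinearMap.congr_fun (mC_lA B.toSubring n _) z
        have hr : ∀ z, mC B.toSubring n (rA B.toSubring ((y.unop : ↥B):A) (n+1) z)
            = rA B.toSubring ((y.unop : ↥B):A) n (mC B.toSubring n z) :=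
          fun z => LinearMap.congr_fun (mC_rA B.toSubring n _) z
        rw [hl, hr]
    | add x₁ x₂ h1 h2 => rw [add_smul, add_smul, map_add, h1, h2]

theorem dvdd_Q_succ (n : ℕ) :
    Dvdd (↥B ⊗[k] (↥B)ᵐᵒᵖ) (CC B.toSubring (n+1) : Type u)
      (CC B.toSubring (n+2) : Type u) := by
  refine ⟨1, fun _ => uCBe B n, fun _ => mCBe B n, ?_⟩
  rw [Fin.sum_univ_one]
  ext x
  show mC B.toSubring n (uC B.toSubring n x) = x
  exact LinearMap.congr_fun (mC_uC B.toSubring n) x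

/-- Forget the `B^e`-structure of a linear map down to `ℤ`. -/
def toZlin {M N : Type u} [AddCommGroup M] [AddCommGroup N] [Module ℤ M] [Module ℤ N]
    {R : Type u} [Ring R] [Module R M] [Module R N] (f : M →ₗ[R] N) : M →ₗ[ℤ] N where
  toFun := f
  map_add' := f.map_add
  map_smul' z x := by
    simpa using map_intCast_smul f.toAddMonoidHom ℤ ℤ z x

theorem dividesBB_of_dvdd (m n : ℕ)
    (h : Dvdd (↥B ⊗[k] (↥B)ᵐᵒᵖ) (CC B.toSubring (m+1) : Type u)
      (CC B.toSubring (n+1) : Type u)) :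
    DividesBB B.toSubring (m+1) (n+1) := by
  obtain ⟨r, f, g, hfg⟩ := h
  have key : ∀ {p q : ℕ}
      (F : (CC B.toSubring (p+1) : Type u) →ₗ[↥B ⊗[k] (↥B)ᵐᵒᵖ]
        (CC B.toSubring (q+1) : Type u)),
      IsBBHom B.toSubring (toZlin F) := by
    intro p q F b
    constructor
    · intro x
      show F (lA B.toSubring (b:A) p x) = lA B.toSubring (b:A) q (F x)
      rw [← smul_tmul_one B p b x, map_smul, smul_tmul_one]
    · intro x
      show F (rA B.toSubring (b:A) p x) = rA B.toSubring (b:A) q (F x)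
      rw [← smul_one_tmul B p b x, map_smul, smul_one_tmul]
  refine ⟨r, fun i => toZlin (f i), fun i => toZlin (g i),
    fun i => key (f i), fun i => key (g i), ?_⟩
  ext x
  have h2 := LinearMap.congr_fun hfg x
  rw [LinearMap.sum_apply] at h2 ⊢
  exact h2

end Bridge
section Decomp
variable (k : Type u) [Field k] (R : Type u) [Ring R] [Algebra k R]

theorem decomp_aux (nBe : ℕ) (M : Fin nBe → Type u)
    [∀ i, AddCommGroup (M i)] [∀ i, Module R (M i)]
    (hall : ∀ (N : Type u) [AddCommGroup N] [Module R N],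
      Module.Finite R N → Nontrivial N →
      (∀ f : N →ₗ[R] N, f ∘ₗ f = f → f = 0 ∨ f = LinearMap.id) →
      ∃ i, Nonempty (N ≃ₗ[R] M i)) :
    ∀ (d : ℕ) (N : Type u) [AddCommGroup N] [Module R N] [Module k N]
      [IsScalarTower k R N] [FiniteDimensional k N], Module.finrank k N ≤ d →
      ∃ (c : Fin nBe → ℕ)
        (f : ∀ i, Fin (c i) → (N →ₗ[R] M i)) (g : ∀ i, Fin (c i) → (M i →ₗ[R] N)),
        (∑ i, ∑ j, (g i j).comp (f i j)) = LinearMap.id ∧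
        (∀ i, c i ≠ 0 → Dvdd R (M i) N) := by
  intro d
  induction d using Nat.strong_induction_on with
  | _ d ih =>
    intro N _ _ _ _ _ hrank
    rcases subsingleton_or_nontrivial N with hN | hN
    · refine ⟨fun _ => 0, fun i j => j.elim0, fun i j => j.elim0, ?_, fun i h => absurd rfl h⟩
      ext x
      exact Subsingleton.elim _ _
    · by_cases hin : ∀ f : N →ₗ[R] N, f ∘ₗ f = f → f = 0 ∨ f = LinearMap.id
      · obtain ⟨i₀, ⟨e⟩⟩ := hall N (Module.Finite.of_restrictScalars_finite k R N) hN hin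
        classical
        refine ⟨fun i => if i = i₀ then 1 else 0,
          fun i _ => if h : i = i₀ then h ▸ e.toLinearMap else 0,
          fun i _ => if h : i = i₀ then h ▸ e.symm.toLinearMap else 0, ?_, ?_⟩
        · have h0 : ∀ i ∈ Finset.univ, i ≠ i₀ →
              (∑ j : Fin (if i = i₀ then 1 else 0),
                ((if h : i = i₀ then h ▸ e.symm.toLinearMap else 0).comp
                  (if h : i = i₀ then h ▸ e.toLinearMap else 0)
                  : N →ₗ[R] N)) = 0 := by
            intro i _ hne
            haveI : IsEmpty (Fin (if i = i₀ then 1 else 0)) := by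
              rw [if_neg hne]; infer_instance
            rw [Finset.univ_eq_empty, Finset.sum_empty]
          rw [Finset.sum_eq_single i₀ h0 (fun h => absurd (Finset.mem_univ i₀) h)]
          rw [Finset.sum_const, Finset.card_univ, Fintype.card_fin, if_pos rfl, one_smul]
          rw [dif_pos rfl, dif_pos rfl]
          ext x
          exact e.symm_apply_apply x
        · intro i hi
          have hii : i = i₀ := by
            by_contra hne
            exact hi (if_neg hne)
          subst hii
          refine ⟨1, fun _ => e.symm.toLinearMap, fun _ => e.toLinearMap, ?_⟩
          rw [Fin.sum_univ_one]
          ext x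
          exact e.apply_symm_apply x
      · push_neg at hin
        obtain ⟨e, hee, he0, heid⟩ := hin
        set N₁ := LinearMap.ker e with hN₁
        set N₂ := LinearMap.range e with hN₂
        let eK := LinearMap.restrictScalars k e
        have hrk : Module.finrank k ↥(LinearMap.range eK)
            + Module.finrank k ↥(LinearMap.ker eK) = Module.finrank k N :=
          LinearMap.finrank_range_add_finrank_ker eK
        have hrange : Module.finrank k ↥(LinearMap.range eK) = Module.finrank k ↥N₂ := rfl
        have hker : Module.finrank k ↥(LinearMap.ker eK) = Module.finrank k ↥N₁ := rfl
        have hnt2 : Nontrivial ↥N₂ := by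
          obtain ⟨x, hx⟩ : ∃ x, e x ≠ 0 := by
            by_contra h
            push_neg at h
            exact he0 (LinearMap.ext h)
          exact ⟨⟨⟨e x, LinearMap.mem_range_self e x⟩, 0, by
            intro h
            exact hx (by simpa [Subtype.ext_iff] using h)⟩⟩
        have hnt1 : Nontrivial ↥N₁ := by
          obtain ⟨x, hx⟩ : ∃ x, e x ≠ x := by
            by_contra h
            push_neg at h
            exact heid (LinearMap.ext h)
          refine ⟨⟨⟨x - e x, ?_⟩, 0, ?_⟩⟩
          · rw [LinearMap.mem_ker, map_sub]
            have := LinearMap.congr_fun hee x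
            simp only [LinearMap.comp_apply] at this
            rw [this, sub_self]
          · intro h
            have : x - e x = (0 : N) := by simpa [Subtype.ext_iff] using h
            exact (sub_ne_zero_of_ne (Ne.symm hx)) this
        have hpos2 : 0 < Module.finrank k ↥N₂ := by
          rw [← hrange]
          exact Module.finrank_pos_iff.mpr hnt2
        have hpos1 : 0 < Module.finrank k ↥N₁ := by
          rw [← hker]
          exact Module.finrank_pos_iff.mpr hnt1
        rw [hrange, hker] at hrk
        have hlt1 : Module.finrank k ↥N₁ < d := by omega
        have hlt2 : Module.finrank k ↥N₂ < d := by omega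
        haveI : FiniteDimensional k ↥N₁ :=
          (inferInstance : FiniteDimensional k ↥(LinearMap.ker eK))
        haveI : FiniteDimensional k ↥N₂ :=
          (inferInstance : FiniteDimensional k ↥(LinearMap.range eK))
        obtain ⟨c₁, f₁, g₁, hsum₁, hdvd₁⟩ :=
          ih (Module.finrank k ↥N₁) hlt1 ↥N₁ (le_refl _)
        obtain ⟨c₂, f₂, g₂, hsum₂, hdvd₂⟩ :=
          ih (Module.finrank k ↥N₂) hlt2 ↥N₂ (le_refl _)
        have hker' : ∀ x : N, e ((LinearMap.id - e : N →ₗ[R] N) x) = 0 := by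
          intro x
          have hx := LinearMap.congr_fun hee x
          simp only [LinearMap.comp_apply] at hx
          rw [LinearMap.sub_apply, map_sub, LinearMap.id_apply, hx, sub_self]
        let pr₁ : N →ₗ[R] ↥N₁ := LinearMap.codRestrict N₁
          (LinearMap.id - e : N →ₗ[R] N)
          (fun x => by rw [LinearMap.mem_ker]; exact hker' x)
        let inj₁ : ↥N₁ →ₗ[R] N := N₁.subtype
        let pr₂ : N →ₗ[R] ↥N₂ := e.rangeRestrict
        let inj₂ : ↥N₂ →ₗ[R] N := N₂.subtype
        have hsplit : ∀ x : N, inj₁ (pr₁ x) + inj₂ (pr₂ x) = x := by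
          intro x
          show (LinearMap.id - e : N →ₗ[R] N) x + e x = x
          rw [LinearMap.sub_apply, LinearMap.id_apply, sub_add_cancel]
        have hretr₁ : ∀ y : ↥N₁, pr₁ (inj₁ y) = y := by
          rintro ⟨x, hx⟩
          rw [LinearMap.mem_ker] at hx
          refine Subtype.ext ?_
          show (LinearMap.id - e : N →ₗ[R] N) x = x
          rw [LinearMap.sub_apply, LinearMap.id_apply, hx, sub_zero]
        have hretr₂ : ∀ y : ↥N₂, pr₂ (inj₂ y) = y := by
          rintro ⟨x, hx⟩
          obtain ⟨w, rfl⟩ := hx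
          refine Subtype.ext ?_
          show e (e w) = e w
          have := LinearMap.congr_fun hee w
          simpa only [LinearMap.comp_apply] using this
        have hDvdd1 : Dvdd R ↥N₁ N := by
          refine ⟨1, fun _ => inj₁, fun _ => pr₁, ?_⟩
          rw [Fin.sum_univ_one]
          exact LinearMap.ext hretr₁
        have hDvdd2 : Dvdd R ↥N₂ N := by
          refine ⟨1, fun _ => inj₂, fun _ => pr₂, ?_⟩
          rw [Fin.sum_univ_one]
          exact LinearMap.ext hretr₂
        let F : ∀ i : Fin nBe, Fin (c₁ i + c₂ i) → (N →ₗ[R] M i) := fun i =>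
          Fin.addCases (fun j => (f₁ i j).comp pr₁) (fun j => (f₂ i j).comp pr₂)
        let G : ∀ i : Fin nBe, Fin (c₁ i + c₂ i) → (M i →ₗ[R] N) := fun i =>
          Fin.addCases (fun j => inj₁.comp (g₁ i j)) (fun j => inj₂.comp (g₂ i j))
        refine ⟨fun i => c₁ i + c₂ i, F, G, ?_, ?_⟩
        · ext x
          rw [LinearMap.id_apply, LinearMap.sum_apply]
          have hterm : ∀ i : Fin nBe,
              (∑ j, ((G i j).comp (F i j) : N →ₗ[R] N)) x
              = inj₁ ((∑ j, (g₁ i j).comp (f₁ i j)) (pr₁ x))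
                + inj₂ ((∑ j, (g₂ i j).comp (f₂ i j)) (pr₂ x)) := by
            intro i
            rw [LinearMap.sum_apply, Fin.sum_univ_add]
            simp only [F, G, Fin.addCases_left, Fin.addCases_right, LinearMap.comp_apply,
              LinearMap.sum_apply]
            rw [map_sum, map_sum]
          rw [Finset.sum_congr rfl (fun i _ => hterm i), Finset.sum_add_distrib]
          rw [← map_sum, ← map_sum]
          have e1 : ∑ i, (∑ j, (g₁ i j).comp (f₁ i j)) (pr₁ x) = pr₁ x := by
            have := LinearMap.congr_fun hsum₁ (pr₁ x)
            rw [LinearMap.sum_apply] at this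
            exact this
          have e2 : ∑ i, (∑ j, (g₂ i j).comp (f₂ i j)) (pr₂ x) = pr₂ x := by
            have := LinearMap.congr_fun hsum₂ (pr₂ x)
            rw [LinearMap.sum_apply] at this
            exact this
          rw [e1, e2]
          exact hsplit x
        · intro i hi
          have hi' : c₁ i + c₂ i ≠ 0 := hi
          by_cases h1 : c₁ i ≠ 0
          · exact (hdvd₁ i h1).trans hDvdd1
          · have h2 : c₂ i ≠ 0 := by omega
            exact (hdvd₂ i h2).trans hDvdd2

end Decomp
section Combine
variable {R : Type u} [Ring R]

theorem dvdd_combine {nBe : ℕ} (M : Fin nBe → Type u)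
    [∀ i, AddCommGroup (M i)] [∀ i, Module R (M i)]
    {N N' : Type u} [AddCommGroup N] [Module R N] [AddCommGroup N'] [Module R N']
    (c : Fin nBe → ℕ) (f : ∀ i, Fin (c i) → (N →ₗ[R] M i))
    (g : ∀ i, Fin (c i) → (M i →ₗ[R] N))
    (hsum : (∑ i, ∑ j, (g i j).comp (f i j)) = LinearMap.id)
    (h : ∀ i, c i ≠ 0 → Dvdd R (M i) N') : Dvdd R N N' := by
  have hchoice : ∀ i, ∃ (r : ℕ) (α : Fin r → (M i →ₗ[R] N')) (β : Fin r → (N' →ₗ[R] M i)),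
      (c i ≠ 0 → ∑ t, (β t).comp (α t) = LinearMap.id) := by
    intro i
    by_cases hc : c i ≠ 0
    · obtain ⟨r, α, β, hs⟩ := h i hc
      exact ⟨r, α, β, fun _ => hs⟩
    · exact ⟨0, fun t => t.elim0, fun t => t.elim0, fun hcc => absurd hcc hc⟩
  choose r α β hαβ using hchoice
  refine dvdd_of_fintype R (ι := Σ i : Fin nBe, Fin (c i) × Fin (r i))
    (fun p => (α p.1 p.2.2).comp (f p.1 p.2.1))
    (fun p => (g p.1 p.2.1).comp (β p.1 p.2.2)) ?_
  ext x
  rw [LinearMap.sum_apply, LinearMap.id_apply]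
  have hsig : ∑ p : Σ i : Fin nBe, Fin (c i) × Fin (r i),
      (((g p.1 p.2.1).comp (β p.1 p.2.2)).comp
        ((α p.1 p.2.2).comp (f p.1 p.2.1))) x
      = ∑ i, ∑ q : Fin (c i) × Fin (r i),
        g i q.1 (β i q.2 (α i q.2 (f i q.1 x))) := by
    simp only [LinearMap.comp_apply]
    rw [← Finset.univ_sigma_univ, Finset.sum_sigma]
  rw [hsig]
  have hi : ∀ i, ∑ q : Fin (c i) × Fin (r i), g i q.1 (β i q.2 (α i q.2 (f i q.1 x)))
      = ∑ j, g i j (f i j x) := by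
    intro i
    by_cases hc : c i = 0
    · haveI : IsEmpty (Fin (c i)) := by rw [hc]; infer_instance
      haveI : IsEmpty (Fin (c i) × Fin (r i)) := inferInstance
      rw [Finset.univ_eq_empty, Finset.sum_empty, Finset.univ_eq_empty, Finset.sum_empty]
    · rw [Fintype.sum_prod_type]
      refine Finset.sum_congr rfl fun j _ => ?_
      have hb := LinearMap.congr_fun (hαβ i hc) (f i j x)
      rw [LinearMap.sum_apply, LinearMap.id_apply] at hb
      calc ∑ t, g i j (β i t (α i t (f i j x)))
          = g i j (∑ t, β i t (α i t (f i j x))) := (map_sum (g i j) _ _).symm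
        _ = g i j (f i j x) := by rw [show ∑ t, β i t (α i t (f i j x)) = f i j x from hb]
  rw [Finset.sum_congr rfl fun i _ => hi i]
  have := LinearMap.congr_fun hsum x
  rw [LinearMap.sum_apply, LinearMap.id_apply] at this
  calc ∑ i, ∑ j, g i j (f i j x)
      = ∑ i, (∑ j, (g i j).comp (f i j)) x := by
        refine Finset.sum_congr rfl fun i _ => ?_
        rw [LinearMap.sum_apply]
        rfl
    _ = x := this

end Combine
set_option maxHeartbeats 2000000 in
open scoped TensorProduct in
/-- If `B ⊆ A` are finite-dimensional `k`-algebras and the enveloping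
algebra `B^e = B ⊗[k] Bᵐᵒᵖ` has finite representation type, with exactly `nBe`
isomorphism classes of finitely generated indecomposable modules (represented by the
family `M`), then `d(B,A) ≤ 1 + 2 ⬝ nBe`. -/
theorem depth_le_of_finite_rep_type_of_env
    (k : Type u) [Field k] (A : Type u) [Ring A] [Algebra k A] [FiniteDimensional k A]
    (B : Subalgebra k A) (nBe : ℕ)
    (M : Fin nBe → Type u)
    [∀ i, AddCommGroup (M i)] [∀ i, Module (↥B ⊗[k] (↥B)ᵐᵒᵖ) (M i)]
    (hfg : ∀ i, Module.Finite (↥B ⊗[k] (↥B)ᵐᵒᵖ) (M i))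
    (hnontriv : ∀ i, Nontrivial (M i))
    (hindec : ∀ i (f : M i →ₗ[↥B ⊗[k] (↥B)ᵐᵒᵖ] M i), f ∘ₗ f = f → f = 0 ∨ f = LinearMap.id)
    (hpairwise : ∀ i j, i ≠ j → IsEmpty (M i ≃ₗ[↥B ⊗[k] (↥B)ᵐᵒᵖ] M j))
    (hall : ∀ (N : Type u) [AddCommGroup N] [Module (↥B ⊗[k] (↥B)ᵐᵒᵖ) N],
      Module.Finite (↥B ⊗[k] (↥B)ᵐᵒᵖ) N → Nontrivial N →
      (∀ f : N →ₗ[↥B ⊗[k] (↥B)ᵐᵒᵖ] N, f ∘ₗ f = f → f = 0 ∨ f = LinearMap.id) →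
      ∃ i, Nonempty (N ≃ₗ[↥B ⊗[k] (↥B)ᵐᵒᵖ] M i)) :
    depth B.toSubring ≤ (1 + 2 * nBe : ℕ∞) := by
  classical
  rcases subsingleton_or_nontrivial A with hA | hA
  · haveI hT0 : Subsingleton (Tpow A 0 : Type u) := inferInstanceAs (Subsingleton A)
    haveI hCC1 : Subsingleton (CC B.toSubring 1 : Type u) := by
      constructor
      intro a b
      obtain ⟨x, rfl⟩ := mkCL_surjective B.toSubring 0 a
      obtain ⟨y, rfl⟩ := mkCL_surjective B.toSubring 0 b
      exact congrArg (fun z => mkCL B.toSubring 0 z) (Subsingleton.elim x y)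
    haveI hCC0 : Subsingleton (CC B.toSubring 0 : Type u) :=
      inferInstanceAs (Subsingleton ↥B.toSubring)
    have hd1 : DividesBB B.toSubring 1 0 := by
      refine ⟨0, fun i => i.elim0, fun i => i.elim0, fun i => i.elim0, fun i => i.elim0, ?_⟩
      ext x
      exact Subsingleton.elim _ _
    have hd0 : DividesBB B.toSubring 0 1 := by
      refine ⟨0, fun i => i.elim0, fun i => i.elim0, fun i => i.elim0, fun i => i.elim0, ?_⟩
      ext x
      exact Subsingleton.elim _ _
    have hdep : HasDepth B.toSubring 1 := Or.inl ⟨0, rfl, hd1, hd0⟩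
    have h1 : depth B.toSubring ≤ ((1 : ℕ) : ℕ∞) := sInf_le ⟨1, hdep, rfl⟩
    refine le_trans h1 ?_
    rw [Nat.cast_one]
    exact le_add_right le_rfl
  · have hdecomp : ∀ m : ℕ, ∃ (c : Fin nBe → ℕ)
        (f : ∀ i, Fin (c i) →
          ((CC B.toSubring (m+1) : Type u) →ₗ[↥B ⊗[k] (↥B)ᵐᵒᵖ] M i))
        (g : ∀ i, Fin (c i) →
          (M i →ₗ[↥B ⊗[k] (↥B)ᵐᵒᵖ] (CC B.toSubring (m+1) : Type u))),
        (∑ i, ∑ j, (g i j).comp (f i j)) = LinearMap.id ∧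
        (∀ i, c i ≠ 0 →
          Dvdd (↥B ⊗[k] (↥B)ᵐᵒᵖ) (M i) (CC B.toSubring (m+1) : Type u)) := by
      intro m
      haveI := finite_k_Q B m
      exact decomp_aux k (↥B ⊗[k] (↥B)ᵐᵒᵖ) nBe M hall
        (Module.finrank k (CC B.toSubring (m+1) : Type u))
        (CC B.toSubring (m+1) : Type u) (le_refl _)
    let P : ℕ → Finset (Fin nBe) := fun m =>
      Finset.univ.filter
        (fun i => Dvdd (↥B ⊗[k] (↥B)ᵐᵒᵖ) (M i) (CC B.toSubring (m+1) : Type u))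
    have hmono : ∀ m, P m ⊆ P (m+1) := by
      intro m i hi
      rw [Finset.mem_filter] at hi ⊢
      exact ⟨Finset.mem_univ i, hi.2.trans (dvdd_Q_succ B m)⟩
    have hP0 : (P 0).Nonempty := by
      obtain ⟨c, f, g, hsum, hdvd⟩ := hdecomp 0
      by_cases hc : ∃ i, c i ≠ 0
      · obtain ⟨i, hi⟩ := hc
        exact ⟨i, Finset.mem_filter.mpr ⟨Finset.mem_univ i, hdvd i hi⟩⟩
      · exfalso
        push_neg at hc
        have hzero : (∑ i, ∑ j, (g i j).comp (f i j)) = 0 := by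
          refine Finset.sum_eq_zero fun i _ => ?_
          haveI : IsEmpty (Fin (c i)) := by rw [hc i]; infer_instance
          rw [Finset.univ_eq_empty, Finset.sum_empty]
        rw [hzero] at hsum
        obtain ⟨a, b, hab⟩ := hA
        have ha := LinearMap.congr_fun hsum (mkCL B.toSubring 0 a)
        have hb := LinearMap.congr_fun hsum (mkCL B.toSubring 0 b)
        simp only [LinearMap.zero_apply, LinearMap.id_apply] at ha hb
        have h3 : mkCL B.toSubring 0 a = mkCL B.toSubring 0 b := ha.symm.trans hb
        erw [mkCL_apply, mkCL_apply, Submodule.Quotient.eq] at h3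
        have h4 : a - b ∈ (⊥ : Submodule ℤ (Tpow A 0 : Type u)) := h3
        replace h4 := (Submodule.mem_bot ℤ (M := (Tpow A 0 : Type u))).mp h4
        exact hab (sub_eq_zero.mp h4)
    have hstep : ∃ m, m < nBe ∧ P m = P (m+1) := by
      by_contra hno
      push_neg at hno
      have hchain : ∀ t, t ≤ nBe → (P 0).card + t ≤ (P t).card := by
        intro t
        induction t with
        | zero => intro _; simp
        | succ t iht =>
          intro ht
          have h1 := iht (by omega)
          have hss : P t ⊂ P (t+1) :=
            Finset.ssubset_iff_subset_ne.mpr ⟨hmono t, hno t (by omega)⟩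
          have h2 := Finset.card_lt_card hss
          omega
      have hfin := hchain nBe le_rfl
      have hcard : (P nBe).card ≤ nBe := le_trans (Finset.card_le_univ _) (by simp)
      have hpos : 1 ≤ (P 0).card := Finset.card_pos.mpr hP0
      omega
    obtain ⟨m, hmlt, hPm⟩ := hstep
    obtain ⟨c, f, g, hsum, hdvd⟩ := hdecomp (m+1)
    have hkey : Dvdd (↥B ⊗[k] (↥B)ᵐᵒᵖ) (CC B.toSubring (m+2) : Type u)
        (CC B.toSubring (m+1) : Type u) := by
      refine dvdd_combine M c f g hsum ?_
      intro i hi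
      have hmem : i ∈ P (m+1) := Finset.mem_filter.mpr ⟨Finset.mem_univ i, hdvd i hi⟩
      rw [← hPm] at hmem
      exact (Finset.mem_filter.mp hmem).2
    have hBB1 : DividesBB B.toSubring (m+2) (m+1) := dividesBB_of_dvdd B (m+1) m hkey
    have hBB2 : DividesBB B.toSubring (m+1) (m+2) := dividesBB_succ B.toSubring m
    have hdep : HasDepth B.toSubring (2*(m+1)+1) := Or.inl ⟨m+1, rfl, hBB1, hBB2⟩
    have hle : depth B.toSubring ≤ ((2*(m+1)+1 : ℕ) : ℕ∞) :=
      sInf_le ⟨2*(m+1)+1, hdep, rfl⟩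
    refine le_trans hle ?_
    calc ((2*(m+1)+1 : ℕ) : ℕ∞) ≤ ((1 + 2*nBe : ℕ) : ℕ∞) := by
          refine Nat.cast_le.mpr ?_
          omega
      _ = 1 + 2*(nBe : ℕ∞) := by push_cast; ring
end

section
/- Let K be an algebraically closed field, Q a finite connected acyclic quiver, A = KQ its path algebra, and B = K·1_A + rad A the primary arrow subalgebra (the span of the identity together with all paths of length ≥ 1). Then A is indecomposable as a B-B-bimodule; indeed the endomorphism ring End(_B A _B) is a local ring. -/
universe u

/-- `f` is an endomorphism of `A` as a `B`-`B`-bimodule, for a subalgebra `B ⊆ A`: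
an additive endomorphism commuting with left and right multiplication by `B`. -/
def IsBimoduleEndo {K : Type u} [Field K] {A : Type u} [Ring A] [Algebra K A]
    (B : Subalgebra K A) (f : AddMonoid.End A) : Prop :=
  ∀ b ∈ B, ∀ x : A, f (b * x) = b * f x ∧ f (x * b) = f x * b

namespace Stmt13

variable {K : Type u} [Field K] {V : Type u} [Quiver.{u+1} V]
variable {A : Type u} [Ring A] [Algebra K A]

abbrev Idx (V : Type u) [Quiver.{u+1} V] := Σ (a : V) (b : V), Quiver.Path a b

/-! ### Scalar endomorphisms -/

/-- Scalar multiplication as an additive endomorphism. -/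
def smulE (K : Type u) [Field K] (A : Type u) [Ring A] [Algebra K A] (c : K) :
    AddMonoid.End A :=
  AddMonoidHom.mk' (fun x => c • x) (fun x y => smul_add c x y)

@[simp] lemma smulE_apply (c : K) (x : A) : smulE K A c x = c • x := rfl

lemma smulE_one : smulE K A 1 = 1 :=
  AddMonoidHom.ext fun x => one_smul K x

lemma smulE_zero : smulE K A 0 = 0 :=
  AddMonoidHom.ext fun x => zero_smul K x

lemma smulE_mul (c d : K) : smulE K A c * smulE K A d = smulE K A (c * d) :=
  AddMonoidHom.ext fun x => (smul_smul c d x)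

lemma smulE_sub (c d : K) : smulE K A (c - d) = smulE K A c - smulE K A d :=
  AddMonoidHom.ext fun x => sub_smul c d x

lemma smulE_pow (c : K) (m : ℕ) : smulE K A c ^ m = smulE K A (c ^ m) := by
  induction m with
  | zero => simpa using smulE_one.symm
  | succ n ih => rw [pow_succ, pow_succ, ih, smulE_mul]

/-- An idempotent nilpotent element is zero. -/
lemma idem_nil_eq_zero {R : Type*} [MonoidWithZero R] {x : R}
    (hx : x * x = x) (hn : IsNilpotent x) : x = 0 := by
  obtain ⟨m, hm⟩ := hn
  have hp : ∀ k : ℕ, x ^ (k + 1) = x := by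
    intro k
    induction k with
    | zero => exact pow_one x
    | succ n ih => rw [pow_succ, ih, hx]
  cases m with
  | zero => rw [pow_zero] at hm; rw [← mul_one x, hm, mul_zero]
  | succ n => rw [hp n] at hm; exact hm

/-! ### Combinatorics of paths -/

lemma toPath_length {a b : V} (e : a ⟶ b) : e.toPath.length = 1 := rfl

lemma idx_len_zero (s : Idx V) (h : s.2.2.length = 0) :
    ∃ c : V, s = ⟨c, c, Quiver.Path.nil⟩ := by
  obtain ⟨a, b, p⟩ := s
  cases p with
  | nil => exact ⟨a, rfl⟩
  | cons p e => simp [Quiver.Path.length] at h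

lemma path_length_le [Fintype V]
    (hacyclic : ∀ (a : V) (p : Quiver.Path a a), p = Quiver.Path.nil)
    {a b : V} (p : Quiver.Path a b) : p.length ≤ Fintype.card V := by
  classical
  have H : ∀ {a b : V} (p : Quiver.Path a b),
      p.length ≤ (Finset.univ.filter
        (fun c => ∃ q : Quiver.Path c b, q.length ≠ 0)).card := by
    intro a b p
    induction p with
    | nil => simp
    | @cons c d p e ih =>
      have hsub : (Finset.univ.filter
            (fun x => ∃ q : Quiver.Path x c, q.length ≠ 0)) ⊂
          (Finset.univ.filter (fun x => ∃ q : Quiver.Path x d, q.length ≠ 0)) := by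
        constructor
        · intro x hx
          simp only [Finset.mem_filter, Finset.mem_univ, true_and] at hx ⊢
          obtain ⟨q, hq⟩ := hx
          exact ⟨q.comp e.toPath, by simp [Quiver.Path.length_comp, toPath_length]⟩
        · intro hle
          have hc : c ∈ Finset.univ.filter
              (fun x => ∃ q : Quiver.Path x d, q.length ≠ 0) := by
            simp only [Finset.mem_filter, Finset.mem_univ, true_and]
            exact ⟨e.toPath, by simp [toPath_length]⟩
          have := hle hc
          simp only [Finset.mem_filter, Finset.mem_univ, true_and] at this
          obtain ⟨q, hq⟩ := this
          exact hq (by rw [hacyclic c q]; rfl)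
      have := Finset.card_lt_card hsub
      simpa [Quiver.Path.length] using Nat.lt_of_le_of_lt ih this
  exact le_trans (H p) (le_trans (Finset.card_filter_le _ _) (by simp))

lemma eq_of_symPath {α : Sort*} (P : V → α)
    (h : ∀ a b : V, (a ⟶ b) → P a = P b)
    {a b : Quiver.Symmetrify V} (p : Quiver.Path a b) : P a = P b := by
  induction p with
  | nil => rfl
  | @cons c d p e ih =>
    refine ih.trans ?_
    rcases e with e | e
    · exact h _ _ e
    · exact (h _ _ e).symm

lemma exists_incident (hconn : Subsingleton (Quiver.WeaklyConnectedComponent V))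
    {i a : V} (hia : i ≠ a) :
    (∃ c : V, Nonempty (c ⟶ a)) ∨ (∃ c : V, Nonempty (a ⟶ c)) := by
  have : (Quiver.WeaklyConnectedComponent.mk i : Quiver.WeaklyConnectedComponent V)
      = Quiver.WeaklyConnectedComponent.mk a := Subsingleton.elim _ _
  obtain ⟨p⟩ := (Quiver.WeaklyConnectedComponent.eq i a).mp this
  cases p with
  | nil => exact absurd rfl hia
  | @cons c d p e =>
    rcases e with e | e
    · exact Or.inl ⟨c, ⟨e⟩⟩
    · exact Or.inr ⟨c, ⟨e⟩⟩

/-! ### The filtration by path length -/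

/-- span of basis paths of length at least `k` -/
def W (bas : Module.Basis (Idx V) K A) (k : ℕ) : Submodule K A :=
  Submodule.span K {x : A | ∃ s : Idx V, k ≤ s.2.2.length ∧ x = bas s}

lemma mem_W_iff (bas : Module.Basis (Idx V) K A) (k : ℕ) (x : A) :
    x ∈ W bas k ↔ ∀ s : Idx V, s.2.2.length < k → bas.repr x s = 0 := by
  constructor
  · intro hx
    let T : Submodule K A :=
      { carrier := {y : A | ∀ s : Idx V, s.2.2.length < k → bas.repr y s = 0}
        add_mem' := fun {y z} hy hz s hs => by
          rw [map_add, Finsupp.add_apply, hy s hs, hz s hs, add_zero]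
        zero_mem' := fun s _ => by simp
        smul_mem' := fun c y hy s hs => by
          rw [map_smul, Finsupp.smul_apply, hy s hs, smul_zero] }
    have hT : W bas k ≤ T := by
      rw [W, Submodule.span_le]
      rintro y ⟨t, ht, rfl⟩ s hs
      rw [bas.repr_self]
      exact Finsupp.single_eq_of_ne (fun h => absurd (h ▸ ht) (by omega))
    exact hT hx
  · intro h
    have hx : x = (bas.repr x).sum fun s c => c • bas s := by
      conv_lhs => rw [← bas.linearCombination_repr x]
      rw [Finsupp.linearCombination_apply]
    rw [hx, Finsupp.sum]
    refine Submodule.sum_mem _ fun s hs => ?_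
    refine Submodule.smul_mem _ _ (Submodule.subset_span ⟨s, ?_, rfl⟩)
    by_contra hlt
    exact (Finsupp.mem_support_iff.mp hs) (h s (by omega))

lemma W_mono (bas : Module.Basis (Idx V) K A) {j k : ℕ} (h : j ≤ k) : W bas k ≤ W bas j :=
  Submodule.span_mono fun _ ⟨s, hs, hx⟩ => ⟨s, le_trans h hs, hx⟩

lemma mem_W_zero (bas : Module.Basis (Idx V) K A) (x : A) : x ∈ W bas 0 :=
  (mem_W_iff bas 0 x).mpr fun s hs => absurd hs (by omega)

lemma W_card_eq_bot [Fintype V]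
    (hacyclic : ∀ (a : V) (p : Quiver.Path a a), p = Quiver.Path.nil)
    (bas : Module.Basis (Idx V) K A) {x : A} (hx : x ∈ W bas (Fintype.card V + 1)) :
    x = 0 := by
  have hset : {y : A | ∃ s : Idx V, Fintype.card V + 1 ≤ s.2.2.length ∧ y = bas s}
      = ∅ := by
    ext y
    simp only [Set.mem_setOf_eq, Set.mem_empty_iff_false, iff_false, not_exists]
    rintro ⟨a, b, p⟩ ⟨hs, rfl⟩
    exact absurd (path_length_le hacyclic p) (by simp only at hs; omega)
  rw [W, hset, Submodule.span_empty] at hx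
  simpa using hx

variable (bas : Module.Basis (Idx V) K A)
variable (hmul : ∀ (i j k : V) (p : Quiver.Path i j) (q : Quiver.Path j k),
      bas ⟨i, j, p⟩ * bas ⟨j, k, q⟩ = bas ⟨i, k, p.comp q⟩)
variable (hzero : ∀ (i j j' k : V) (p : Quiver.Path i j) (q : Quiver.Path j' k), j ≠ j' →
      bas ⟨i, j, p⟩ * bas ⟨j', k, q⟩ = 0)

include hmul hzero

lemma mul_W_mem (t : Idx V) (k : ℕ) {x : A} (hx : x ∈ W bas k) :
    bas t * x ∈ W bas (t.2.2.length + k) := by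
  induction hx using Submodule.span_induction with
  | mem y hy =>
    obtain ⟨s, hs, rfl⟩ := hy
    obtain ⟨a, b, q⟩ := t
    obtain ⟨c, d, p⟩ := s
    by_cases hbc : b = c
    · subst hbc
      rw [hmul]
      refine Submodule.subset_span ⟨⟨a, d, q.comp p⟩, ?_, rfl⟩
      simp only [Quiver.Path.length_comp]
      simp only at hs
      omega
    · rw [hzero _ _ _ _ _ _ hbc]
      exact Submodule.zero_mem _
  | zero => rw [mul_zero]; exact Submodule.zero_mem _
  | add y z _ _ hy hz => rw [mul_add]; exact Submodule.add_mem _ hy hz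
  | smul c y _ hy => rw [mul_smul_comm]; exact Submodule.smul_mem _ _ hy

lemma one_eq_sum [Fintype V] :
    (1 : A) = ∑ i : V, bas ⟨i, i, Quiver.Path.nil⟩ := by
  classical
  have key : ∀ s : Idx V, (∑ i : V, bas ⟨i, i, Quiver.Path.nil⟩) * bas s = bas s := by
    rintro ⟨c, d, p⟩
    rw [Finset.sum_mul, Finset.sum_eq_single c]
    · rw [hmul]
      congr 1
      simp [Quiver.Path.nil_comp]
    · intro i _ hi
      exact hzero _ _ _ _ _ _ hi
    · intro h
      exact absurd (Finset.mem_univ c) h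
  have hlin : LinearMap.mulLeft K (∑ i : V, bas ⟨i, i, Quiver.Path.nil⟩)
      = LinearMap.id (R := K) (M := A) := by
    refine Module.Basis.ext bas fun s => ?_
    simpa using key s
  have := DFunLike.congr_fun hlin (1 : A)
  simpa using this.symm

lemma repr_one [Fintype V] (a : V) :
    bas.repr (1 : A) ⟨a, a, Quiver.Path.nil⟩ = 1 := by
  classical
  rw [one_eq_sum bas hmul hzero, map_sum, Finsupp.finset_sum_apply,
    Finset.sum_eq_single a]
  · rw [bas.repr_self, Finsupp.single_eq_same]
  · intro i _ hi
    rw [bas.repr_self]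
    exact Finsupp.single_eq_of_ne fun h => hi (congrArg Sigma.fst h).symm
  · intro h
    exact absurd (Finset.mem_univ a) h

/-- coefficient of `bas t * x` at `t` equals the coefficient of `x` at the
stationary path on the endpoint of `t`. -/
lemma repr_basMul (a b : V) (q : Quiver.Path a b) (x : A) :
    bas.repr (bas ⟨a, b, q⟩ * x) ⟨a, b, q⟩ = bas.repr x ⟨b, b, Quiver.Path.nil⟩ := by
  have h : ∀ s : Idx V, bas.repr (bas ⟨a, b, q⟩ * bas s) ⟨a, b, q⟩
      = bas.repr (bas s) ⟨b, b, Quiver.Path.nil⟩ := by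
    rintro ⟨c, d, p⟩
    by_cases hc : b = c
    · subst hc
      rw [hmul]
      cases p with
      | nil =>
        rw [Quiver.Path.comp_nil, bas.repr_self, bas.repr_self,
          Finsupp.single_eq_same, Finsupp.single_eq_same]
      | cons p' e =>
        rw [bas.repr_self, bas.repr_self, Finsupp.single_eq_of_ne,
          Finsupp.single_eq_of_ne]
        · intro h
          have := congrArg (fun s : Idx V => s.2.2.length) h
          simp only [Quiver.Path.length_nil, Quiver.Path.length_cons,
            Quiver.Path.length_comp] at this
          omega
        · intro h
          have := congrArg (fun s : Idx V => s.2.2.length) h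
          simp only [Quiver.Path.length_nil, Quiver.Path.length_cons,
            Quiver.Path.length_comp] at this
          omega
    · rw [hzero _ _ _ _ _ _ hc, map_zero, Finsupp.coe_zero, Pi.zero_apply,
        bas.repr_self, Finsupp.single_eq_of_ne]
      intro h
      exact hc (congrArg Sigma.fst h)
  let φ : A →ₗ[K] K := (Finsupp.lapply (⟨a, b, q⟩ : Idx V)).comp
    ((bas.repr : A →ₗ[K] (Idx V →₀ K)).comp (LinearMap.mulLeft K (bas ⟨a, b, q⟩)))
  let ψ : A →ₗ[K] K := (Finsupp.lapply (⟨b, b, Quiver.Path.nil⟩ : Idx V)).comp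
    (bas.repr : A →ₗ[K] (Idx V →₀ K))
  have hφψ : φ = ψ := Module.Basis.ext bas fun s => h s
  exact DFunLike.congr_fun hφψ x

lemma repr_mulBas (a b : V) (q : Quiver.Path a b) (x : A) :
    bas.repr (x * bas ⟨a, b, q⟩) ⟨a, b, q⟩ = bas.repr x ⟨a, a, Quiver.Path.nil⟩ := by
  have h : ∀ s : Idx V, bas.repr (bas s * bas ⟨a, b, q⟩) ⟨a, b, q⟩
      = bas.repr (bas s) ⟨a, a, Quiver.Path.nil⟩ := by
    rintro ⟨c, d, p⟩
    by_cases hd : d = a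
    · subst hd
      rw [hmul]
      cases p with
      | nil =>
        rw [Quiver.Path.nil_comp, bas.repr_self, bas.repr_self,
          Finsupp.single_eq_same, Finsupp.single_eq_same]
      | cons p' e =>
        rw [bas.repr_self, bas.repr_self, Finsupp.single_eq_of_ne,
          Finsupp.single_eq_of_ne]
        · intro h
          have := congrArg (fun s : Idx V => s.2.2.length) h
          simp only [Quiver.Path.length_nil, Quiver.Path.length_cons,
            Quiver.Path.length_comp] at this
          omega
        · intro h
          have := congrArg (fun s : Idx V => s.2.2.length) h
          simp only [Quiver.Path.length_nil, Quiver.Path.length_cons,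
            Quiver.Path.length_comp] at this
          omega
    · rw [hzero _ _ _ _ _ _ hd, map_zero, Finsupp.coe_zero, Pi.zero_apply,
        bas.repr_self, Finsupp.single_eq_of_ne]
      intro h
      exact hd (congrArg (fun s : Idx V => s.2.1) h).symm
  let φ : A →ₗ[K] K := (Finsupp.lapply (⟨a, b, q⟩ : Idx V)).comp
    ((bas.repr : A →ₗ[K] (Idx V →₀ K)).comp (LinearMap.mulRight K (bas ⟨a, b, q⟩)))
  let ψ : A →ₗ[K] K := (Finsupp.lapply (⟨a, a, Quiver.Path.nil⟩ : Idx V)).comp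
    (bas.repr : A →ₗ[K] (Idx V →₀ K))
  have hφψ : φ = ψ := Module.Basis.ext bas fun s => h s
  exact DFunLike.congr_fun hφψ x

/-- **Key lemma**: every bimodule endomorphism is a scalar plus a nilpotent. -/
lemma key [Fintype V]
    (hacyclic : ∀ (a : V) (p : Quiver.Path a a), p = Quiver.Path.nil)
    (hconn : Subsingleton (Quiver.WeaklyConnectedComponent V)) (hne : Nonempty V)
    (f : AddMonoid.End A)
    (hf : IsBimoduleEndo (Algebra.adjoin K
      {x : A | ∃ (i j : V) (p : Quiver.Path i j), p.length ≠ 0 ∧ x = bas ⟨i, j, p⟩}) f) :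
    ∃ lam : K, Commute (smulE K A lam) f ∧ IsNilpotent (f - smulE K A lam) := by
  classical
  obtain ⟨i₀⟩ := hne
  set B := Algebra.adjoin K
    {x : A | ∃ (i j : V) (p : Quiver.Path i j), p.length ≠ 0 ∧ x = bas ⟨i, j, p⟩} with hBdef
  have hmem : ∀ (i j : V) (p : Quiver.Path i j), p.length ≠ 0 → bas ⟨i, j, p⟩ ∈ B :=
    fun i j p hp => Algebra.subset_adjoin ⟨i, j, p, hp, rfl⟩
  have hfK : ∀ (c : K) (x : A), f (c • x) = c • f x := by
    intro c x
    have h := (hf (algebraMap K A c) (Subalgebra.algebraMap_mem B c) x).1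
    rwa [← Algebra.smul_def, ← Algebra.smul_def] at h
  have hfl : ∀ (i j : V) (p : Quiver.Path i j), p.length ≠ 0 → ∀ x : A,
      f (bas ⟨i, j, p⟩ * x) = bas ⟨i, j, p⟩ * f x :=
    fun i j p hp x => (hf _ (hmem i j p hp) x).1
  have hfr : ∀ (i j : V) (p : Quiver.Path i j), p.length ≠ 0 → ∀ x : A,
      f (x * bas ⟨i, j, p⟩) = f x * bas ⟨i, j, p⟩ :=
    fun i j p hp x => (hf _ (hmem i j p hp) x).2
  -- F1 : value on long paths
  have F1 : ∀ (a b : V) (q : Quiver.Path a b), q.length ≠ 0 →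
      f (bas ⟨a, b, q⟩) = bas ⟨a, b, q⟩ * f 1 := by
    intro a b q hq
    have := hfl a b q hq 1
    rwa [mul_one] at this
  have hstat : ∀ (a b : V) (q : Quiver.Path a b),
      bas ⟨a, a, Quiver.Path.nil⟩ * bas ⟨a, b, q⟩ = bas ⟨a, b, q⟩ := by
    intro a b q
    rw [hmul]
    congr 1
    simp [Quiver.Path.nil_comp]
  have hstat' : ∀ (a b : V) (q : Quiver.Path a b),
      bas ⟨a, b, q⟩ * bas ⟨b, b, Quiver.Path.nil⟩ = bas ⟨a, b, q⟩ := by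
    intro a b q
    rw [hmul]
    congr 1
  have F2 : ∀ (a b : V) (q : Quiver.Path a b), q.length ≠ 0 →
      f (bas ⟨a, a, Quiver.Path.nil⟩) * bas ⟨a, b, q⟩ = bas ⟨a, b, q⟩ * f 1 := by
    intro a b q hq
    have h1 := hfr a b q hq (bas ⟨a, a, Quiver.Path.nil⟩)
    rw [hstat a b q, F1 a b q hq] at h1
    exact h1.symm
  have F3 : ∀ (i a b : V) (q : Quiver.Path a b), q.length ≠ 0 → i ≠ a →
      f (bas ⟨i, i, Quiver.Path.nil⟩) * bas ⟨a, b, q⟩ = 0 := by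
    intro i a b q hq hia
    have h1 := hfr a b q hq (bas ⟨i, i, Quiver.Path.nil⟩)
    rw [hzero _ _ _ _ _ _ hia, map_zero] at h1
    exact h1.symm
  have F4 : ∀ (a b : V) (q : Quiver.Path a b), q.length ≠ 0 →
      bas ⟨a, b, q⟩ * f (bas ⟨b, b, Quiver.Path.nil⟩) = f 1 * bas ⟨a, b, q⟩ := by
    intro a b q hq
    have h1 := hfl a b q hq (bas ⟨b, b, Quiver.Path.nil⟩)
    rw [hstat' a b q] at h1
    rw [← h1]
    have h2 := hfr a b q hq 1
    rw [one_mul] at h2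
    rw [h2]
  have F5 : ∀ (i a b : V) (q : Quiver.Path a b), q.length ≠ 0 → i ≠ b →
      bas ⟨a, b, q⟩ * f (bas ⟨i, i, Quiver.Path.nil⟩) = 0 := by
    intro i a b q hq hib
    have h1 := hfl a b q hq (bas ⟨i, i, Quiver.Path.nil⟩)
    rw [hzero _ _ _ _ _ _ (fun h => hib h.symm), map_zero] at h1
    exact h1.symm
  -- coefficient versions
  have G2 : ∀ (a b : V) (q : Quiver.Path a b), q.length ≠ 0 →
      bas.repr (f (bas ⟨a, a, Quiver.Path.nil⟩)) ⟨a, a, Quiver.Path.nil⟩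
        = bas.repr (f 1) ⟨b, b, Quiver.Path.nil⟩ := by
    intro a b q hq
    have h := congrArg (fun y => bas.repr y ⟨a, b, q⟩) (F2 a b q hq)
    simpa only [repr_mulBas bas hmul hzero a b q, repr_basMul bas hmul hzero a b q]
      using h
  have G4 : ∀ (a b : V) (q : Quiver.Path a b), q.length ≠ 0 →
      bas.repr (f (bas ⟨b, b, Quiver.Path.nil⟩)) ⟨b, b, Quiver.Path.nil⟩
        = bas.repr (f 1) ⟨a, a, Quiver.Path.nil⟩ := by
    intro a b q hq
    have h := congrArg (fun y => bas.repr y ⟨a, b, q⟩) (F4 a b q hq)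
    simpa only [repr_mulBas bas hmul hzero a b q, repr_basMul bas hmul hzero a b q]
      using h
  -- U1 : off-diagonal coefficients vanish
  have U1 : ∀ i a : V, i ≠ a →
      bas.repr (f (bas ⟨i, i, Quiver.Path.nil⟩)) ⟨a, a, Quiver.Path.nil⟩ = 0 := by
    intro i a hia
    rcases exists_incident hconn hia with ⟨c, ⟨e⟩⟩ | ⟨c, ⟨e⟩⟩
    · have h := congrArg (fun y => bas.repr y ⟨c, a, e.toPath⟩)
        (F5 i c a e.toPath (by rw [toPath_length]; omega) hia)
      simpa only [repr_basMul bas hmul hzero c a e.toPath, map_zero,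
        Finsupp.coe_zero, Pi.zero_apply] using h
    · have h := congrArg (fun y => bas.repr y ⟨a, c, e.toPath⟩)
        (F3 i a c e.toPath (by rw [toPath_length]; omega) hia)
      simpa only [repr_mulBas bas hmul hzero a c e.toPath, map_zero,
        Finsupp.coe_zero, Pi.zero_apply] using h
  -- U2 : the diagonal coefficient of f 1
  have U2 : ∀ a : V, bas.repr (f 1) ⟨a, a, Quiver.Path.nil⟩
      = bas.repr (f (bas ⟨a, a, Quiver.Path.nil⟩)) ⟨a, a, Quiver.Path.nil⟩ := by
    intro a
    have h1 : f 1 = ∑ i : V, f (bas ⟨i, i, Quiver.Path.nil⟩) := by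
      conv_lhs => rw [one_eq_sum bas hmul hzero]
      exact map_sum f _ _
    rw [h1, map_sum, Finsupp.finset_sum_apply, Finset.sum_eq_single a]
    · intro i _ hi
      exact U1 i a hi
    · intro h
      exact absurd (Finset.mem_univ a) h
  -- U3 : the diagonal coefficient is constant
  have U3 : ∀ a b : V,
      bas.repr (f (bas ⟨a, a, Quiver.Path.nil⟩)) ⟨a, a, Quiver.Path.nil⟩
        = bas.repr (f (bas ⟨b, b, Quiver.Path.nil⟩)) ⟨b, b, Quiver.Path.nil⟩ := by
    have harrow : ∀ a b : V, (a ⟶ b) →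
        bas.repr (f (bas ⟨a, a, Quiver.Path.nil⟩)) ⟨a, a, Quiver.Path.nil⟩
          = bas.repr (f (bas ⟨b, b, Quiver.Path.nil⟩)) ⟨b, b, Quiver.Path.nil⟩ := by
      intro a b e
      have h := G2 a b e.toPath (by rw [toPath_length]; omega)
      rw [U2 b] at h
      exact h
    intro a b
    have : (Quiver.WeaklyConnectedComponent.mk a : Quiver.WeaklyConnectedComponent V)
        = Quiver.WeaklyConnectedComponent.mk b := Subsingleton.elim _ _
    obtain ⟨p⟩ := (Quiver.WeaklyConnectedComponent.eq a b).mp this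
    exact eq_of_symPath
      (fun v => bas.repr (f (bas ⟨v, v, Quiver.Path.nil⟩)) ⟨v, v, Quiver.Path.nil⟩)
      harrow p
  -- the scalar
  set lam : K := bas.repr (f (bas ⟨i₀, i₀, Quiver.Path.nil⟩)) ⟨i₀, i₀, Quiver.Path.nil⟩
    with hlamdef
  have hlam : ∀ a : V,
      bas.repr (f (bas ⟨a, a, Quiver.Path.nil⟩)) ⟨a, a, Quiver.Path.nil⟩ = lam :=
    fun a => U3 a i₀
  -- C1 : f 1 - lam • 1 ∈ W 1
  have C1 : f 1 - lam • 1 ∈ W bas 1 := by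
    rw [mem_W_iff]
    intro s hs
    obtain ⟨c, rfl⟩ := idx_len_zero s (by omega)
    rw [map_sub, Finsupp.sub_apply, map_smul, Finsupp.smul_apply,
      repr_one bas hmul hzero c, U2 c, hlam c]
    simp
  -- C2 : f e_i - lam • e_i ∈ W 1
  have C2 : ∀ i : V, f (bas ⟨i, i, Quiver.Path.nil⟩)
      - lam • bas ⟨i, i, Quiver.Path.nil⟩ ∈ W bas 1 := by
    intro i
    rw [mem_W_iff]
    intro s hs
    obtain ⟨c, rfl⟩ := idx_len_zero s (by omega)
    rw [map_sub, Finsupp.sub_apply, map_smul, Finsupp.smul_apply, bas.repr_self]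
    by_cases hic : i = c
    · subst hic
      rw [Finsupp.single_eq_same, hlam i]
      simp
    · rw [Finsupp.single_eq_of_ne (fun h => hic (congrArg Sigma.fst h).symm), U1 i c hic]
      simp
  -- GG : action on basis vectors
  have GG : ∀ s : Idx V, f (bas s) - lam • bas s ∈ W bas (s.2.2.length + 1) := by
    rintro ⟨a, b, q⟩
    by_cases hq : q.length = 0
    · cases q with
      | nil => simpa using C2 a
      | cons p' e => simp [Quiver.Path.length_cons] at hq
    · have h1 : f (bas ⟨a, b, q⟩) - lam • bas ⟨a, b, q⟩
          = bas ⟨a, b, q⟩ * (f 1 - lam • 1) := by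
        rw [F1 a b q hq, mul_sub, mul_smul_comm, mul_one]
      rw [h1]
      exact mul_W_mem bas hmul hzero ⟨a, b, q⟩ 1 C1
  -- GW : the map x ↦ f x - lam • x raises the filtration
  have GW : ∀ (k : ℕ) (x : A), x ∈ W bas k → f x - lam • x ∈ W bas (k + 1) := by
    intro k x hx
    induction hx using Submodule.span_induction with
    | mem y hy =>
      obtain ⟨s, hs, rfl⟩ := hy
      exact W_mono bas (by omega) (GG s)
    | zero => simpa using Submodule.zero_mem (W bas (k + 1))
    | add y z _ _ hy hz =>
      have h : f (y + z) - lam • (y + z) = (f y - lam • y) + (f z - lam • z) := by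
        rw [map_add, smul_add]
        abel
      rw [h]
      exact Submodule.add_mem _ hy hz
    | smul c y _ hy =>
      have h : f (c • y) - lam • (c • y) = c • (f y - lam • y) := by
        rw [hfK, smul_sub, smul_comm c lam y]
      rw [h]
      exact Submodule.smul_mem _ _ hy
  -- nilpotency
  refine ⟨lam, ?_, ?_⟩
  · exact AddMonoidHom.ext fun x => (hfK lam x).symm
  · have hpow : ∀ (m : ℕ) (x : A), ((f - smulE K A lam) ^ m) x ∈ W bas m := by
      intro m
      induction m with
      | zero => intro x; simpa using mem_W_zero bas x
      | succ n ih =>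
        intro x
        have h : ((f - smulE K A lam) ^ (n + 1)) x
            = f (((f - smulE K A lam) ^ n) x) - lam • (((f - smulE K A lam) ^ n) x) := by
          rw [pow_succ']
          rfl
        rw [h]
        exact GW n _ (ih x)
    refine ⟨Fintype.card V + 1, ?_⟩
    refine AddMonoidHom.ext fun x => ?_
    have h := hpow (Fintype.card V + 1) x
    exact W_card_eq_bot hacyclic bas h

end Stmt13

/-- Let `Q` be a finite connected acyclic quiver, `A = KQ` its path
algebra over an algebraically closed field `K` (axiomatized by a basis of paths
multiplying by concatenation), and `B = K·1_A + rad A` the primary arrow subalgebra.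
Then `A` is indecomposable as a `B`-`B`-bimodule (the only idempotent bimodule
endomorphisms are `0` and `1`); indeed its bimodule endomorphism ring
`End(_B A _B)` is a local ring (for every bimodule endomorphism `f`, either `f` or
`1 - f` is invertible). -/


theorem arrow_subalgebra_bimodule_indecomposable
    (K : Type u) [Field K] [IsAlgClosed K]
    (V : Type u) [Quiver.{u+1} V] [Fintype V] [∀ a b : V, Finite (a ⟶ b)]
    (hacyclic : ∀ (a : V) (p : Quiver.Path a a), p = Quiver.Path.nil)
    (hconn : Subsingleton (Quiver.WeaklyConnectedComponent V)) (hne : Nonempty V)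
    (A : Type u) [Ring A] [Algebra K A]
    (bas : Module.Basis (Σ (a : V) (b : V), Quiver.Path a b) K A)
    (hmul : ∀ (i j k : V) (p : Quiver.Path i j) (q : Quiver.Path j k),
      bas ⟨i, j, p⟩ * bas ⟨j, k, q⟩ = bas ⟨i, k, p.comp q⟩)
    (hzero : ∀ (i j j' k : V) (p : Quiver.Path i j) (q : Quiver.Path j' k), j ≠ j' →
      bas ⟨i, j, p⟩ * bas ⟨j', k, q⟩ = 0) :
    (Nontrivial A ∧
      ∀ f : AddMonoid.End A,
        IsBimoduleEndo (Algebra.adjoin K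
          {x : A | ∃ (i j : V) (p : Quiver.Path i j), p.length ≠ 0 ∧ x = bas ⟨i, j, p⟩}) f →
        f * f = f → f = 0 ∨ f = 1) ∧
    (∀ f : AddMonoid.End A,
      IsBimoduleEndo (Algebra.adjoin K
        {x : A | ∃ (i j : V) (p : Quiver.Path i j), p.length ≠ 0 ∧ x = bas ⟨i, j, p⟩}) f →
      IsUnit f ∨ IsUnit (1 - f)) := by
  classical
  obtain ⟨i₀⟩ := hne
  have hnontriv : Nontrivial A :=
    nontrivial_of_ne (bas ⟨i₀, i₀, Quiver.Path.nil⟩) 0 (bas.ne_zero _)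
  have hinj : ∀ c : K, Stmt13.smulE K A c = 0 → c = 0 := by
    intro c hc
    have h1 := DFunLike.congr_fun hc (bas ⟨i₀, i₀, Quiver.Path.nil⟩)
    have h2 := congrArg
      (fun y => bas.repr y (⟨i₀, i₀, Quiver.Path.nil⟩ : Stmt13.Idx V)) h1
    simpa [bas.repr_self] using h2
  refine ⟨⟨hnontriv, ?_⟩, ?_⟩
  · intro f hf hidem
    obtain ⟨lam, hcomm, hnil⟩ :=
      Stmt13.key bas hmul hzero hacyclic hconn ⟨i₀⟩ f hf
    obtain ⟨g, hg⟩ : ∃ g : AddMonoid.End A, g = f - Stmt13.smulE K A lam := ⟨_, rfl⟩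
    rw [← hg] at hnil
    have hsl : Stmt13.smulE K A lam = f - g := by rw [hg]; exact (sub_sub_cancel f _).symm
    have hcfg : Commute f g := by
      rw [hg]; exact (Commute.refl f).sub_right hcomm.symm
    have hexp : Stmt13.smulE K A (lam * lam - lam) = g * g - g * f - g * f + g := by
      rw [Stmt13.smulE_sub, ← Stmt13.smulE_mul, hsl]
      simp only [sub_mul, mul_sub, hidem, hcfg.eq]
      abel
    have hnil2 : IsNilpotent (Stmt13.smulE K A (lam * lam - lam)) := by
      rw [hexp]
      have h3 : g * g - g * f - g * f + g = g * (g - f - f + 1) := by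
        rw [mul_add, mul_sub, mul_sub, mul_one]
      rw [h3]
      exact Commute.isNilpotent_mul_right
        ((((Commute.refl g).sub_right hcfg.symm).sub_right hcfg.symm).add_right
          (Commute.one_right g)) hnil
    obtain ⟨m, hm⟩ := hnil2
    rw [Stmt13.smulE_pow] at hm
    have hcm : (lam * lam - lam) ^ m = 0 := hinj _ hm
    have hc : lam * lam - lam = 0 := by
      by_cases hm0 : m = 0
      · subst hm0
        rw [pow_zero] at hcm
        exact absurd hcm one_ne_zero
      · exact pow_eq_zero_iff hm0 |>.mp hcm
    have h5 : lam * (lam - 1) = 0 := by rw [mul_sub, mul_one]; exact hc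
    rcases mul_eq_zero.mp h5 with hl | hl
    · left
      have hfg : f = g := by rw [hg, hl, Stmt13.smulE_zero, sub_zero]
      exact Stmt13.idem_nil_eq_zero hidem (hfg ▸ hnil)
    · right
      have hl1 : lam = 1 := sub_eq_zero.mp hl
      have hgeq : g = f - 1 := by rw [hg, hl1, Stmt13.smulE_one]
      have hneg : (1 : AddMonoid.End A) - f = -g := by rw [hgeq, neg_sub]
      have hh : ((1 : AddMonoid.End A) - f) * (1 - f) = 1 - f := by
        rw [sub_mul, one_mul, mul_sub, mul_one, hidem]
        abel
      have h0 : (1 : AddMonoid.End A) - f = 0 :=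
        Stmt13.idem_nil_eq_zero hh (by rw [hneg]; exact hnil.neg)
      exact (sub_eq_zero.mp h0).symm
  · intro f hf
    obtain ⟨lam, hcomm, hnil⟩ :=
      Stmt13.key bas hmul hzero hacyclic hconn ⟨i₀⟩ f hf
    by_cases hl : lam = 0
    · right
      have h : f - Stmt13.smulE K A lam = f := by
        rw [hl, Stmt13.smulE_zero, sub_zero]
      rw [h] at hnil
      exact hnil.isUnit_one_sub
    · left
      have hu : IsUnit (Stmt13.smulE K A lam) := by
        refine isUnit_iff_exists.mpr ⟨Stmt13.smulE K A lam⁻¹, ?_, ?_⟩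
        · rw [Stmt13.smulE_mul, mul_inv_cancel₀ hl, Stmt13.smulE_one]
        · rw [Stmt13.smulE_mul, inv_mul_cancel₀ hl, Stmt13.smulE_one]
      have hcom2 : Commute (f - Stmt13.smulE K A lam) (Stmt13.smulE K A lam) :=
        hcomm.symm.sub_left (Commute.refl _)
      have hun := hnil.isUnit_add_right_of_commute hu hcom2
      rwa [sub_add_cancel] at hun
end
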